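/- arXiv:1909.04483 — 3 statements merged into one kernel-verified Lean document; each statement's English description precedes it below -/
import Mathlib

section
/- Let X be a length space, let I ⊆ ℝ be a nondegenerate interval, and let f : I → ℝ be continuous with 0 < f_min ≤ f(t) ≤ f_max < ∞ for all t ∈ I. Then the null distance d̂_f of the warped product I ×_f X is a metric on I × X, and (I × X, d̂_f) is a length space; in particular d̂_f has the approximate midpoint property: for all p, q ∈ I × X and ε > 0 there exists m ∈ I × X with max(d̂_f(p,m), d̂_f(m,q)) ≤ d̂_f(p,q)/2 + ε. (Instance, for warped product spacetimes, of the theorem that the null distance of a locally anti-Lipschitz time function is an intrinsic metric making the spacetime a length space.) -/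
open MeasureTheory

/-- Causal relation of the warped product `I ×_f X`: `(s,x) ≼_f (t,y)` iff `s ≤ t` and
`d(x,y) ≤ ∫_s^t f(u)⁻¹ du`. -/
def WPCausal {X : Type*} [MetricSpace X] (f : ℝ → ℝ) (p q : ℝ × X) : Prop :=
  p.1 ≤ q.1 ∧
    ENNReal.ofReal (dist p.2 q.2) ≤ ∫⁻ u in Set.Ioc p.1 q.1, ENNReal.ofReal ((f u)⁻¹)

/-- `σ` is a piecewise causal chain with `n+1` segments from `p` to `q` inside `I × X`. -/
def WPChain {X : Type*} [MetricSpace X] (I : Set ℝ) (f : ℝ → ℝ) (p q : ℝ × X) (n : ℕ)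
    (σ : ℕ → ℝ × X) : Prop :=
  σ 0 = p ∧ σ (n + 1) = q ∧ (∀ i ≤ n + 1, (σ i).1 ∈ I) ∧
    ∀ i ≤ n, WPCausal f (σ i) (σ (i + 1)) ∨ WPCausal f (σ (i + 1)) (σ i)

/-- The null distance of the warped product `I ×_f X`: the infimum of the null lengths
`Σᵢ |t(pᵢ) − t(p_{i−1})|` of piecewise causal chains from `p` to `q`. -/
noncomputable def nullDist {X : Type*} [MetricSpace X] (I : Set ℝ) (f : ℝ → ℝ)
    (p q : ℝ × X) : ℝ :=
  sInf { r | ∃ n σ, WPChain I f p q n σ ∧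
    r = ∑ i ∈ Finset.range (n + 1), |(σ (i + 1)).1 - (σ i).1| }

namespace NDAux

variable {X : Type*} [MetricSpace X]

/-- The set of null lengths of piecewise causal chains from `p` to `q`. -/
def CL (I : Set ℝ) (f : ℝ → ℝ) (p q : ℝ × X) : Set ℝ :=
  { r | ∃ n σ, WPChain I f p q n σ ∧
    r = ∑ i ∈ Finset.range (n + 1), |(σ (i + 1)).1 - (σ i).1| }

lemma nullDist_def (I : Set ℝ) (f : ℝ → ℝ) (p q : ℝ × X) :
    nullDist I f p q = sInf (CL I f p q) := rfl

lemma CL_nonneg {I : Set ℝ} {f : ℝ → ℝ} {p q : ℝ × X} : ∀ r ∈ CL I f p q, 0 ≤ r := by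
  rintro r ⟨n, σ, -, rfl⟩
  exact Finset.sum_nonneg fun i _ => abs_nonneg _

lemma CL_bdd {I : Set ℝ} {f : ℝ → ℝ} {p q : ℝ × X} : BddBelow (CL I f p q) :=
  ⟨0, fun r hr => CL_nonneg r hr⟩

lemma nullDist_nonneg {I : Set ℝ} {f : ℝ → ℝ} {p q : ℝ × X} : 0 ≤ nullDist I f p q :=
  Real.sInf_nonneg CL_nonneg

lemma nullDist_le_of_mem {I : Set ℝ} {f : ℝ → ℝ} {p q : ℝ × X} {r : ℝ}
    (h : r ∈ CL I f p q) : nullDist I f p q ≤ r := csInf_le CL_bdd h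

lemma WPCausal.refl {f : ℝ → ℝ} (p : ℝ × X) : WPCausal f p p :=
  ⟨le_rfl, by simp⟩

lemma single_mem {I : Set ℝ} {f : ℝ → ℝ} {p q : ℝ × X} (hp : p.1 ∈ I) (hq : q.1 ∈ I)
    (h : WPCausal f p q ∨ WPCausal f q p) : |q.1 - p.1| ∈ CL I f p q := by
  refine ⟨0, fun i => if i = 0 then p else q, ⟨by simp, by simp, ?_, ?_⟩, by simp⟩
  · intro i hi
    rcases Nat.eq_or_lt_of_le (Nat.zero_le i) with h0 | h0
    · simpa [← h0] using hp
    · simp only [Nat.pos_iff_ne_zero.mp h0, if_false]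
      exact hq
  · intro i hi
    interval_cases i
    simpa using h

lemma refl_mem {I : Set ℝ} {f : ℝ → ℝ} {p : ℝ × X} (hp : p.1 ∈ I) :
    (0 : ℝ) ∈ CL I f p p := by
  simpa using single_mem hp hp (Or.inl (WPCausal.refl p))

lemma nullDist_self {I : Set ℝ} {f : ℝ → ℝ} {p : ℝ × X} (hp : p.1 ∈ I) :
    nullDist I f p p = 0 :=
  le_antisymm (nullDist_le_of_mem (refl_mem hp)) nullDist_nonneg

lemma vert_mem {I : Set ℝ} {f : ℝ → ℝ} {s t : ℝ} {x : X} (hs : s ∈ I) (ht : t ∈ I) :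
    |t - s| ∈ CL I f (s, x) (t, x) := by
  refine single_mem hs ht ?_
  rcases le_total s t with h | h
  · exact Or.inl ⟨h, by simp⟩
  · exact Or.inr ⟨h, by simp⟩

lemma sum_range_add' (G : ℕ → ℝ) (a b : ℕ) :
    ∑ i ∈ Finset.range (a + b), G i
      = ∑ i ∈ Finset.range a, G i + ∑ i ∈ Finset.range b, G (a + i) := by
  induction b with
  | zero => simp
  | succ b ih =>
    rw [show a + (b + 1) = (a + b) + 1 from rfl, Finset.sum_range_succ, ih,
      Finset.sum_range_succ, add_assoc]

lemma append_mem {I : Set ℝ} {f : ℝ → ℝ} {p q r : ℝ × X} {r1 r2 : ℝ}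
    (h1 : r1 ∈ CL I f p q) (h2 : r2 ∈ CL I f q r) : r1 + r2 ∈ CL I f p r := by
  obtain ⟨n, σ, ⟨hσ0, hσe, hσI, hσc⟩, rfl⟩ := h1
  obtain ⟨m, τ, ⟨hτ0, hτe, hτI, hτc⟩, rfl⟩ := h2
  set ρ : ℕ → ℝ × X := fun i => if i ≤ n then σ i else τ (i - (n + 1)) with hρ
  have hρσ : ∀ i ≤ n + 1, ρ i = σ i := by
    intro i hi
    rcases Nat.lt_or_ge i (n + 1) with h | h
    · simp [hρ, Nat.lt_succ_iff.mp h]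
    · have : i = n + 1 := le_antisymm hi h
      subst this
      simp [hρ, hσe, ← hτ0]
  have hρτ : ∀ i, ρ (n + 1 + i) = τ i := by
    intro i
    have : ¬ (n + 1 + i ≤ n) := by omega
    simp [hρ, this]
  refine ⟨n + 1 + m, ρ, ⟨by rw [hρσ 0 (by omega)]; exact hσ0, ?_, ?_, ?_⟩, ?_⟩
  · have : n + 1 + m + 1 = n + 1 + (m + 1) := by ring
    rw [this, hρτ]; exact hτe
  · intro i hi
    rcases Nat.lt_or_ge i (n + 1) with h | h
    · rw [hρσ i h.le]; exact hσI i h.le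
    · obtain ⟨k, rfl⟩ : ∃ k, i = n + 1 + k := ⟨i - (n + 1), by omega⟩
      rw [hρτ]; exact hτI k (by omega)
  · intro i hi
    rcases Nat.lt_or_ge i (n + 1) with h | h
    · have h' : i ≤ n := Nat.lt_succ_iff.mp h
      rw [hρσ i (by omega), hρσ (i + 1) (by omega)]
      exact hσc i h'
    · obtain ⟨k, rfl⟩ : ∃ k, i = n + 1 + k := ⟨i - (n + 1), by omega⟩
      have : n + 1 + k + 1 = n + 1 + (k + 1) := by ring
      rw [this, hρτ, hρτ]
      exact hτc k (by omega)
  · conv_rhs => rw [show n + 1 + m + 1 = (n + 1) + (m + 1) by ring,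
      sum_range_add' _ (n + 1) (m + 1)]
    symm
    congr 1
    · refine Finset.sum_congr rfl fun i hi => ?_
      have hi' := Finset.mem_range.mp hi
      rw [hρσ i (by omega), hρσ (i + 1) (by omega)]
    · refine Finset.sum_congr rfl fun i hi => ?_
      have h3 : n + 1 + i + 1 = n + 1 + (i + 1) := by ring
      rw [h3, hρτ, hρτ]

lemma reverse_mem {I : Set ℝ} {f : ℝ → ℝ} {p q : ℝ × X} {r : ℝ}
    (h : r ∈ CL I f p q) : r ∈ CL I f q p := by
  obtain ⟨n, σ, ⟨hσ0, hσe, hσI, hσc⟩, rfl⟩ := h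
  refine ⟨n, fun i => σ (n + 1 - i), ⟨by simpa using hσe, by simpa using hσ0,
    fun i hi => hσI _ (by omega), ?_⟩, ?_⟩
  · intro i hi
    show WPCausal f (σ (n + 1 - i)) (σ (n + 1 - (i + 1)))
      ∨ WPCausal f (σ (n + 1 - (i + 1))) (σ (n + 1 - i))
    have h1 : n + 1 - i = (n - i) + 1 := by omega
    have h2 : n + 1 - (i + 1) = n - i := by omega
    rw [h1, h2]
    exact (hσc (n - i) (by omega)).symm
  · rw [← Finset.sum_range_reflect]
    refine Finset.sum_congr rfl fun i hi => ?_
    have hi' := Finset.mem_range.mp hi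
    show |(σ (n + 1 - 1 - i + 1)).1 - (σ (n + 1 - 1 - i)).1|
      = |(σ (n + 1 - (i + 1))).1 - (σ (n + 1 - i)).1|
    have h1 : n + 1 - 1 - i + 1 = n + 1 - i := by omega
    have h2 : n + 1 - 1 - i = n + 1 - (i + 1) := by omega
    rw [h1, h2, abs_sub_comm]

lemma nullDist_comm {I : Set ℝ} (f : ℝ → ℝ) (p q : ℝ × X) :
    nullDist I f p q = nullDist I f q p := by
  rw [nullDist_def, nullDist_def]
  congr 1
  exact Set.Subset.antisymm (fun r hr => reverse_mem hr) (fun r hr => reverse_mem hr)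

lemma nullDist_triangle {I : Set ℝ} {f : ℝ → ℝ} {p q r : ℝ × X}
    (h1 : (CL I f p q).Nonempty) (h2 : (CL I f q r).Nonempty) :
    nullDist I f p r ≤ nullDist I f p q + nullDist I f q r := by
  refine le_of_forall_pos_le_add fun ε hε => ?_
  obtain ⟨r1, hr1, hr1'⟩ := Real.lt_sInf_add_pos h1 (half_pos hε)
  obtain ⟨r2, hr2, hr2'⟩ := Real.lt_sInf_add_pos h2 (half_pos hε)
  have h3 := nullDist_le_of_mem (append_mem hr1 hr2)
  rw [nullDist_def I f p q, nullDist_def I f q r]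
  linarith

/-- upper bound for the warping integral -/
lemma integ_le {I : Set ℝ} {f : ℝ → ℝ} {fmin : ℝ} (hmin : 0 < fmin)
    (hbd : ∀ t ∈ I, fmin ≤ f t) {c d : ℝ} (h : Set.Ioc c d ⊆ I) :
    ∫⁻ u in Set.Ioc c d, ENNReal.ofReal ((f u)⁻¹) ≤ ENNReal.ofReal (fmin⁻¹ * (d - c)) := by
  calc ∫⁻ u in Set.Ioc c d, ENNReal.ofReal ((f u)⁻¹)
      ≤ ∫⁻ _ in Set.Ioc c d, ENNReal.ofReal fmin⁻¹ :=
        setLIntegral_mono' measurableSet_Ioc fun u hu =>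
          ENNReal.ofReal_le_ofReal (by
            have := hbd u (h hu)
            exact inv_anti₀ hmin this)
    _ = ENNReal.ofReal fmin⁻¹ * volume (Set.Ioc c d) := setLIntegral_const _ _
    _ = ENNReal.ofReal fmin⁻¹ * ENNReal.ofReal (d - c) := by rw [Real.volume_Ioc]
    _ = ENNReal.ofReal (fmin⁻¹ * (d - c)) := (ENNReal.ofReal_mul (by positivity)).symm

lemma integ_ge {I : Set ℝ} {f : ℝ → ℝ} {fmin fmax : ℝ} (hmin : 0 < fmin) (hfmax : 0 < fmax)
    (hbd : ∀ t ∈ I, fmin ≤ f t ∧ f t ≤ fmax) {c d : ℝ} (h : Set.Ioc c d ⊆ I) :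
    ENNReal.ofReal (fmax⁻¹ * (d - c)) ≤ ∫⁻ u in Set.Ioc c d, ENNReal.ofReal ((f u)⁻¹) := by
  calc ENNReal.ofReal (fmax⁻¹ * (d - c))
      = ENNReal.ofReal fmax⁻¹ * ENNReal.ofReal (d - c) := ENNReal.ofReal_mul (inv_nonneg.mpr hfmax.le)
    _ = ENNReal.ofReal fmax⁻¹ * volume (Set.Ioc c d) := by rw [Real.volume_Ioc]
    _ = ∫⁻ _ in Set.Ioc c d, ENNReal.ofReal fmax⁻¹ := (setLIntegral_const _ _).symm
    _ ≤ ∫⁻ u in Set.Ioc c d, ENNReal.ofReal ((f u)⁻¹) :=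
        setLIntegral_mono' measurableSet_Ioc fun u hu =>
          ENNReal.ofReal_le_ofReal (by
            have h1 := (hbd u (h hu)).1
            have h2 := (hbd u (h hu)).2
            exact inv_anti₀ (lt_of_lt_of_le hmin h1) h2)

lemma integ_ne_top {I : Set ℝ} {f : ℝ → ℝ} {fmin : ℝ} (hmin : 0 < fmin)
    (hbd : ∀ t ∈ I, fmin ≤ f t) {c d : ℝ} (h : Set.Ioc c d ⊆ I) :
    ∫⁻ u in Set.Ioc c d, ENNReal.ofReal ((f u)⁻¹) ≠ ⊤ :=
  ne_top_of_le_ne_top ENNReal.ofReal_ne_top (integ_le hmin hbd h)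

lemma integ_add {f : ℝ → ℝ} {c e d : ℝ} (h1 : c ≤ e) (h2 : e ≤ d) :
    ∫⁻ u in Set.Ioc c d, ENNReal.ofReal ((f u)⁻¹)
      = (∫⁻ u in Set.Ioc c e, ENNReal.ofReal ((f u)⁻¹))
        + ∫⁻ u in Set.Ioc e d, ENNReal.ofReal ((f u)⁻¹) := by
  rw [← lintegral_union measurableSet_Ioc (Set.Ioc_disjoint_Ioc_of_le le_rfl),
    Set.Ioc_union_Ioc_eq_Ioc h1 h2]

lemma seg_lb {I : Set ℝ} {f : ℝ → ℝ} {fmin : ℝ} (hIc : I.OrdConnected) (hmin : 0 < fmin)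
    (hbd : ∀ t ∈ I, fmin ≤ f t) {a b : ℝ × X} (ha : a.1 ∈ I) (hb : b.1 ∈ I)
    (h : WPCausal f a b) : fmin * dist a.2 b.2 ≤ b.1 - a.1 := by
  have hsub : Set.Ioc a.1 b.1 ⊆ I := Set.Ioc_subset_Icc_self.trans (hIc.out ha hb)
  have h2 := h.2.trans (integ_le hmin hbd hsub)
  have h3 : dist a.2 b.2 ≤ fmin⁻¹ * (b.1 - a.1) := by
    have hpos : 0 ≤ fmin⁻¹ * (b.1 - a.1) :=
      mul_nonneg (inv_nonneg.mpr hmin.le) (by linarith [h.1])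
    exact (ENNReal.ofReal_le_ofReal_iff hpos).mp h2
  have := mul_le_mul_of_nonneg_left h3 hmin.le
  calc fmin * dist a.2 b.2 ≤ fmin * (fmin⁻¹ * (b.1 - a.1)) := this
    _ = b.1 - a.1 := by field_simp

lemma chain_lb {I : Set ℝ} {f : ℝ → ℝ} {fmin : ℝ} (hIc : I.OrdConnected) (hmin : 0 < fmin)
    (hbd : ∀ t ∈ I, fmin ≤ f t) {p q : ℝ × X} {r : ℝ}
    (hr : ∃ n σ, WPChain I f p q n σ ∧
      r = ∑ i ∈ Finset.range (n + 1), |(σ (i + 1)).1 - (σ i).1|) :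
    |q.1 - p.1| ≤ r ∧ fmin * dist p.2 q.2 ≤ r := by
  obtain ⟨n, σ, ⟨hσ0, hσe, hσI, hσc⟩, rfl⟩ := hr
  constructor
  · have := dist_le_range_sum_dist (fun i => (σ i).1) (n + 1)
    rw [hσ0, hσe] at this
    calc |q.1 - p.1| = dist q.1 p.1 := (Real.dist_eq _ _)
      _ = dist p.1 q.1 := dist_comm _ _
      _ ≤ ∑ i ∈ Finset.range (n + 1), dist (σ i).1 (σ (i + 1)).1 := this
      _ = ∑ i ∈ Finset.range (n + 1), |(σ (i + 1)).1 - (σ i).1| := by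
          refine Finset.sum_congr rfl fun i _ => ?_
          rw [Real.dist_eq, abs_sub_comm]
  · have hd : dist p.2 q.2 ≤ ∑ i ∈ Finset.range (n + 1), dist (σ i).2 (σ (i + 1)).2 := by
      have := dist_le_range_sum_dist (fun i => (σ i).2) (n + 1)
      rw [hσ0, hσe] at this
      exact this
    calc fmin * dist p.2 q.2
        ≤ fmin * ∑ i ∈ Finset.range (n + 1), dist (σ i).2 (σ (i + 1)).2 :=
          mul_le_mul_of_nonneg_left hd hmin.le
      _ = ∑ i ∈ Finset.range (n + 1), fmin * dist (σ i).2 (σ (i + 1)).2 :=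
          Finset.mul_sum _ _ _
      _ ≤ ∑ i ∈ Finset.range (n + 1), |(σ (i + 1)).1 - (σ i).1| := by
          refine Finset.sum_le_sum fun i hi => ?_
          have hi' := Finset.mem_range.mp hi
          have hiI := hσI i (by omega)
          have hi1I := hσI (i + 1) (by omega)
          rcases hσc i (by omega) with hc | hc
          · have := seg_lb hIc hmin hbd hiI hi1I hc
            calc fmin * dist (σ i).2 (σ (i + 1)).2 ≤ (σ (i + 1)).1 - (σ i).1 := this
              _ ≤ |(σ (i + 1)).1 - (σ i).1| := le_abs_self _
          · have := seg_lb hIc hmin hbd hi1I hiI hc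
            rw [dist_comm] at this
            calc fmin * dist (σ i).2 (σ (i + 1)).2 ≤ (σ i).1 - (σ (i + 1)).1 := this
              _ ≤ |(σ (i + 1)).1 - (σ i).1| := by rw [abs_sub_comm]; exact le_abs_self _


/-- Iterated approximate bisection in a length space. -/
lemma bisect (hX : ∀ x y : X, ∀ ε : ℝ, 0 < ε →
      ∃ z : X, max (dist x z) (dist z y) ≤ dist x y / 2 + ε) :
    ∀ k : ℕ, ∀ x y : X, ∀ ε : ℝ, 0 < ε → ∃ z : ℕ → X, z 0 = x ∧ z (2 ^ k) = y ∧
      ∀ i < 2 ^ k, dist (z i) (z (i + 1)) ≤ dist x y / 2 ^ k + ε := by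
  intro k
  induction k with
  | zero =>
    intro x y ε hε
    refine ⟨fun i => if i = 0 then x else y, rfl, rfl, ?_⟩
    intro i hi
    interval_cases i
    simpa using hε.le
  | succ k ih =>
    intro x y ε hε
    obtain ⟨mp, hmp⟩ := hX x y (ε / 2) (by positivity)
    obtain ⟨z1, hz10, hz1e, hz1⟩ := ih x mp (ε / 2) (by positivity)
    obtain ⟨z2, hz20, hz2e, hz2⟩ := ih mp y (ε / 2) (by positivity)
    have h2k : (1 : ℝ) ≤ 2 ^ k := one_le_pow₀ one_le_two
    have h2kpos : (0 : ℝ) < 2 ^ k := by positivity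
    have h2kn : 1 ≤ 2 ^ k := Nat.one_le_two_pow
    have hpow : 2 ^ (k + 1) = 2 ^ k + 2 ^ k := by rw [pow_succ]; omega
    have harith : ∀ d D : ℝ, d ≤ D / 2 + ε / 2 →
        d / 2 ^ k + ε / 2 ≤ D / 2 ^ (k + 1) + ε := by
      intro d D hd
      have h1 : d / 2 ^ k ≤ (D / 2 + ε / 2) / 2 ^ k := by gcongr
      have h2 : (D / 2 + ε / 2) / 2 ^ k = D / 2 ^ (k + 1) + (ε / 2) / 2 ^ k := by
        rw [pow_succ]; ring
      have h3 : (ε / 2) / 2 ^ k ≤ ε / 2 := div_le_self (by positivity) h2k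
      linarith
    have hkey : ∀ j, 2 ^ k ≤ j →
        (if j ≤ 2 ^ k then z1 j else z2 (j - 2 ^ k)) = z2 (j - 2 ^ k) := by
      intro j hj
      rcases Nat.eq_or_lt_of_le hj with h | h
      · rw [← h]
        simp [hz1e, hz20]
      · rw [if_neg (by omega)]
    refine ⟨fun i => if i ≤ 2 ^ k then z1 i else z2 (i - 2 ^ k), by simp [hz10], ?_, ?_⟩
    · show (if 2 ^ (k + 1) ≤ 2 ^ k then z1 (2 ^ (k + 1))
        else z2 (2 ^ (k + 1) - 2 ^ k)) = y
      rw [hkey _ (by omega)]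
      have : 2 ^ (k + 1) - 2 ^ k = 2 ^ k := by omega
      rw [this, hz2e]
    · intro i hi
      show dist (if i ≤ 2 ^ k then z1 i else z2 (i - 2 ^ k))
        (if i + 1 ≤ 2 ^ k then z1 (i + 1) else z2 (i + 1 - 2 ^ k)) ≤ _
      rcases Nat.lt_or_ge i (2 ^ k) with h | h
      · rw [if_pos h.le, if_pos (by omega)]
        exact le_trans (hz1 i h) (harith _ _ (le_trans (le_max_left _ _) hmp))
      · rw [hkey i h, hkey (i + 1) (by omega)]
        have heq : i + 1 - 2 ^ k = (i - 2 ^ k) + 1 := by omega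
        rw [heq]
        have := hz2 (i - 2 ^ k) (by omega)
        calc dist (z2 (i - 2 ^ k)) (z2 (i - 2 ^ k + 1))
            ≤ dist mp y / 2 ^ k + ε / 2 := this
          _ ≤ dist x y / 2 ^ (k + 1) + ε :=
              harith _ _ (le_trans (le_max_right _ _) hmp)

/-- Fine chains in a length space: arbitrarily small steps, total length close to `dist`. -/
lemma fineChain (hX : ∀ x y : X, ∀ ε : ℝ, 0 < ε →
      ∃ z : X, max (dist x z) (dist z y) ≤ dist x y / 2 + ε)
    (x y : X) {δ ε : ℝ} (hδ : 0 < δ) (hε : 0 < ε) :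
    ∃ (N : ℕ) (z : ℕ → X), z 0 = x ∧ z N = y ∧
      (∀ i < N, dist (z i) (z (i + 1)) ≤ δ) ∧
      ∑ i ∈ Finset.range N, dist (z i) (z (i + 1)) ≤ dist x y + ε := by
  obtain ⟨k, hk⟩ := pow_unbounded_of_one_lt (dist x y / (δ / 2)) (one_lt_two (α := ℝ))
  have h2kpos : (0 : ℝ) < 2 ^ k := by positivity
  have hdk : dist x y / 2 ^ k ≤ δ / 2 := by
    rw [div_le_iff₀ h2kpos]
    rw [div_lt_iff₀ (by positivity)] at hk
    linarith
  set ε' : ℝ := min (δ / 2) (ε / 2 ^ k) with hε'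
  have hε'pos : 0 < ε' := lt_min (by positivity) (by positivity)
  obtain ⟨z, hz0, hze, hz⟩ := bisect hX k x y ε' hε'pos
  refine ⟨2 ^ k, z, hz0, hze, ?_, ?_⟩
  · intro i hi
    calc dist (z i) (z (i + 1)) ≤ dist x y / 2 ^ k + ε' := hz i hi
      _ ≤ δ / 2 + δ / 2 := add_le_add hdk (min_le_left _ _)
      _ = δ := by ring
  · calc ∑ i ∈ Finset.range (2 ^ k), dist (z i) (z (i + 1))
        ≤ ∑ _i ∈ Finset.range (2 ^ k), (dist x y / 2 ^ k + ε') :=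
          Finset.sum_le_sum fun i hi => hz i (Finset.mem_range.mp hi)
      _ = dist x y + 2 ^ k * ε' := by
          rw [Finset.sum_const, Finset.card_range, nsmul_eq_mul]
          push_cast
          field_simp
      _ ≤ dist x y + ε := by
          have : (2 : ℝ) ^ k * ε' ≤ 2 ^ k * (ε / 2 ^ k) :=
            mul_le_mul_of_nonneg_left (min_le_right _ _) (by positivity)
          have h2 : (2 : ℝ) ^ k * (ε / 2 ^ k) = ε := by field_simp
          linarith

lemma CL_nonempty (hX : ∀ x y : X, ∀ ε : ℝ, 0 < ε →
      ∃ z : X, max (dist x z) (dist z y) ≤ dist x y / 2 + ε)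
    {I : Set ℝ} {f : ℝ → ℝ} {fmin fmax : ℝ} (hIc : I.OrdConnected)
    (hInd : ∃ a ∈ I, ∃ b ∈ I, a < b) (hmin : 0 < fmin) (hfmax : 0 < fmax)
    (hbd : ∀ t ∈ I, fmin ≤ f t ∧ f t ≤ fmax) {p q : ℝ × X}
    (hp : p.1 ∈ I) (hq : q.1 ∈ I) : (CL I f p q).Nonempty := by
  obtain ⟨a, ha, b, hb, hab⟩ := hInd
  have hmem : ∀ c d : ℝ, c ∈ I → d ∈ I → min c d ∈ I := by
    intro c d hc hd
    rcases le_total c d with h | h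
    · rwa [min_eq_left h]
    · rwa [min_eq_right h]
  set u : ℝ := min (min p.1 q.1) a with hudef
  have hu : u ∈ I := hmem _ _ (hmem _ _ hp hq) ha
  have hua : u ≤ a := min_le_right _ _
  have hub : u < b := lt_of_le_of_lt hua hab
  set v : ℝ := (u + b) / 2 with hvdef
  have huv : u < v := by rw [hvdef]; linarith
  have hv : v ∈ I := hIc.out hu hb ⟨by linarith, by linarith⟩
  have hsub : Set.Ioc u v ⊆ I := Set.Ioc_subset_Icc_self.trans (hIc.out hu hv)
  set δ : ℝ := fmax⁻¹ * (v - u) with hδdef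
  have hδ : 0 < δ := by
    apply mul_pos (inv_pos.mpr hfmax)
    linarith
  obtain ⟨N, z, hz0, hze, hstep, -⟩ := fineChain hX p.2 q.2 hδ one_pos
  have hup : ∀ w w' : X, dist w w' ≤ δ → WPCausal f (u, w) (v, w') := by
    intro w w' hd
    exact ⟨huv.le, le_trans (ENNReal.ofReal_le_ofReal hd)
      (integ_ge hmin hfmax hbd hsub)⟩
  have hvert : ∀ w : X, WPCausal f (u, w) (v, w) := fun w => ⟨huv.le, by simp⟩
  have claim : ∀ M, M ≤ N → (CL I f ((u : ℝ), z 0) ((u : ℝ), z M)).Nonempty := by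
    intro M
    induction M with
    | zero => exact fun _ => ⟨0, refl_mem hu⟩
    | succ M ihM =>
      intro hM
      obtain ⟨r, hr⟩ := ihM (by omega)
      have h1 : |v - u| ∈ CL I f ((u : ℝ), z M) ((v : ℝ), z (M + 1)) :=
        single_mem hu hv (Or.inl (hup _ _ (hstep M (by omega))))
      have h2 : |u - v| ∈ CL I f ((v : ℝ), z (M + 1)) ((u : ℝ), z (M + 1)) :=
        single_mem hv hu (Or.inr (hvert _))
      exact ⟨_, append_mem (append_mem hr h1) h2⟩
  obtain ⟨r, hr⟩ := claim N le_rfl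
  rw [hz0, hze] at hr
  have h1 : |u - p.1| ∈ CL I f p ((u : ℝ), p.2) := vert_mem hp hu
  have h2 : |q.1 - u| ∈ CL I f ((u : ℝ), q.2) q := vert_mem hu hq
  exact ⟨_, append_mem (append_mem h1 hr) h2⟩

/-- Splitting a causal segment at an intermediate time, up to `ε` of null length. -/
lemma split (hX : ∀ x y : X, ∀ ε : ℝ, 0 < ε →
      ∃ z : X, max (dist x z) (dist z y) ≤ dist x y / 2 + ε)
    {I : Set ℝ} {f : ℝ → ℝ} {fmin fmax : ℝ} (hIc : I.OrdConnected)
    (hmin : 0 < fmin) (hfmax : 0 < fmax)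
    (hbd : ∀ t ∈ I, fmin ≤ f t ∧ f t ≤ fmax) {a b : ℝ × X}
    (ha : a.1 ∈ I) (hb : b.1 ∈ I) (hab : WPCausal f a b)
    {θ ε : ℝ} (hθ0 : 0 ≤ θ) (hθ : θ ≤ b.1 - a.1) (hε : 0 < ε) :
    ∃ m : ℝ × X, m.1 ∈ I ∧ nullDist I f a m ≤ θ + ε ∧
      nullDist I f m b ≤ (b.1 - a.1 - θ) + ε := by
  classical
  have hbd1 : ∀ t ∈ I, fmin ≤ f t := fun t ht => (hbd t ht).1
  have hIab : Set.Icc a.1 b.1 ⊆ I := hIc.out ha hb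
  have hm : a.1 + θ ∈ I := hIab ⟨by linarith, by linarith⟩
  rcases le_or_gt θ (ε / 2) with hc | hc
  · -- θ small: vertical moves suffice
    refine ⟨((a.1 + θ : ℝ), a.2), hm, ?_, ?_⟩
    · have h1 : |(a.1 + θ) - a.1| ∈ CL I f a ((a.1 + θ : ℝ), a.2) := vert_mem ha hm
      have := nullDist_le_of_mem h1
      rw [show a.1 + θ - a.1 = θ by ring, abs_of_nonneg hθ0] at this
      linarith
    · have h1 : |a.1 - (a.1 + θ)| ∈ CL I f ((a.1 + θ : ℝ), a.2) a := vert_mem hm ha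
      have h2 : |b.1 - a.1| ∈ CL I f a b := single_mem ha hb (Or.inl hab)
      have := nullDist_le_of_mem (append_mem h1 h2)
      rw [show a.1 - (a.1 + θ) = -θ by ring, abs_neg, abs_of_nonneg hθ0,
        abs_of_nonneg (by linarith : (0:ℝ) ≤ b.1 - a.1)] at this
      linarith
  · -- θ not small: use a fine chain in X
    set δ0 : ℝ := ε / (4 * fmax) with hδ0def
    have hδ0 : 0 < δ0 := by positivity
    obtain ⟨N, z, hz0, hze, hstep, hsum⟩ := fineChain hX a.2 b.2 hδ0 hδ0
    have hsub1 : Set.Ioc a.1 (a.1 + θ) ⊆ I :=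
      Set.Ioc_subset_Icc_self.trans ((Set.Icc_subset_Icc le_rfl (by linarith)).trans hIab)
    set Aen := ∫⁻ u in Set.Ioc a.1 (a.1 + θ), ENNReal.ofReal ((f u)⁻¹) with hAendef
    have hfin : Aen ≠ ⊤ := integ_ne_top hmin hbd1 hsub1
    set A : ℝ := Aen.toReal with hAdef
    have hA0 : 0 ≤ A := ENNReal.toReal_nonneg
    have hAofReal : ENNReal.ofReal A = Aen := ENNReal.ofReal_toReal hfin
    set g : ℕ → ℝ := fun j => ∑ i ∈ Finset.range j, dist (z i) (z (i + 1)) with hgdef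
    set j : ℕ := Nat.findGreatest (fun j => g j ≤ A) N with hjdef
    have hjN : j ≤ N := Nat.findGreatest_le N
    have hgj : g j ≤ A := by
      have h0 : (fun j => g j ≤ A) 0 := by
        show g 0 ≤ A
        rw [hgdef]
        simpa using hA0
      have h1 := Nat.findGreatest_spec (P := fun i => g i ≤ A) (Nat.zero_le N) h0
      rw [← hjdef] at h1
      exact h1
    have hdxzj : dist a.2 (z j) ≤ A := by
      have h1 := dist_le_range_sum_dist z j
      rw [hz0] at h1
      exact h1.trans hgj
    refine ⟨((a.1 + θ : ℝ), z j), hm, ?_, ?_⟩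
    · -- chain a → m : single causal segment
      have hcaus : WPCausal f a ((a.1 + θ : ℝ), z j) := by
        refine ⟨show a.1 ≤ a.1 + θ by linarith, ?_⟩
        calc ENNReal.ofReal (dist a.2 (z j)) ≤ ENNReal.ofReal A :=
              ENNReal.ofReal_le_ofReal hdxzj
          _ = Aen := hAofReal
      have := nullDist_le_of_mem (single_mem ha hm (Or.inl hcaus))
      rw [show a.1 + θ - a.1 = θ by ring, abs_of_nonneg hθ0] at this
      linarith
    · -- chain m → m' → b
      have hm' : a.1 + θ - ε / 2 ∈ I := hIab ⟨by linarith, by linarith⟩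
      have h1 : |(a.1 + θ - ε / 2) - (a.1 + θ)| ∈
          CL I f ((a.1 + θ : ℝ), z j) ((a.1 + θ - ε / 2 : ℝ), z j) := vert_mem hm hm'
      set Ben := ∫⁻ u in Set.Ioc (a.1 + θ) b.1, ENNReal.ofReal ((f u)⁻¹) with hBendef
      have hBsplit : ∫⁻ u in Set.Ioc a.1 b.1, ENNReal.ofReal ((f u)⁻¹) = Aen + Ben :=
        integ_add (by linarith) (by linarith)
      have hsub2 : Set.Ioc (a.1 + θ - ε / 2) (a.1 + θ) ⊆ I :=
        Set.Ioc_subset_Icc_self.trans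
          ((Set.Icc_subset_Icc (by linarith) (by linarith)).trans hIab)
      have hlow : ENNReal.ofReal (2 * δ0) ≤
          ∫⁻ u in Set.Ioc (a.1 + θ - ε / 2) (a.1 + θ), ENNReal.ofReal ((f u)⁻¹) := by
        have := integ_ge hmin hfmax hbd hsub2
        have heq : fmax⁻¹ * ((a.1 + θ) - (a.1 + θ - ε / 2)) = 2 * δ0 := by
          rw [hδ0def]
          field_simp
          ring
        rwa [heq] at this
      have hkey : ENNReal.ofReal (dist (z j) b.2) ≤
          ∫⁻ u in Set.Ioc (a.1 + θ - ε / 2) b.1, ENNReal.ofReal ((f u)⁻¹) := by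
        rw [integ_add (by linarith : a.1 + θ - ε / 2 ≤ a.1 + θ) (by linarith : a.1 + θ ≤ b.1)]
        rcases Nat.eq_or_lt_of_le hjN with hjeq | hjlt
        · rw [hjeq, hze]
          simp
        · have hnot : ¬ (g (j + 1) ≤ A) :=
            Nat.findGreatest_is_greatest (Nat.lt_succ_self j) (by omega)
          push_neg at hnot
          have hstepj : dist (z j) (z (j + 1)) ≤ δ0 := hstep j (by omega)
          have hgj1 : g (j + 1) = g j + dist (z j) (z (j + 1)) := Finset.sum_range_succ _ _
          have hgjlb : A - δ0 ≤ g j := by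
            rw [hgj1] at hnot
            linarith
          -- dist (z j) b.2 ≤ (total) - g j ≤ dist a.2 b.2 + δ0 - g j
          have hdzb : dist (z j) b.2 ≤ dist a.2 b.2 - A + 2 * δ0 := by
            have h2 := dist_le_Ico_sum_dist z hjN
            rw [hze] at h2
            have h3 : g j + ∑ i ∈ Finset.Ico j N, dist (z i) (z (i + 1)) = g N := by
              show (∑ i ∈ Finset.range j, dist (z i) (z (i + 1))) +
                ∑ i ∈ Finset.Ico j N, dist (z i) (z (i + 1))
                = ∑ i ∈ Finset.range N, dist (z i) (z (i + 1))
              rw [Finset.range_eq_Ico, Finset.range_eq_Ico]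
              exact Finset.sum_Ico_consecutive (fun i => dist (z i) (z (i + 1))) (Nat.zero_le j) hjN
            have h4 : g N ≤ dist a.2 b.2 + δ0 := hsum
            linarith
          -- ofReal (dist a.2 b.2 - A) ≤ Ben
          have hBA : ENNReal.ofReal (dist a.2 b.2 - A) ≤ Ben := by
            by_cases hBtop : Ben = ⊤
            · rw [hBtop]; exact le_top
            · have h5 : ENNReal.ofReal (dist a.2 b.2) ≤
                  ENNReal.ofReal (A + Ben.toReal) := by
                rw [ENNReal.ofReal_add hA0 ENNReal.toReal_nonneg, hAofReal,
                  ENNReal.ofReal_toReal hBtop]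
                exact hab.2.trans hBsplit.le
              have h6 : dist a.2 b.2 ≤ A + Ben.toReal :=
                (ENNReal.ofReal_le_ofReal_iff
                  (add_nonneg hA0 ENNReal.toReal_nonneg)).mp h5
              calc ENNReal.ofReal (dist a.2 b.2 - A) ≤ ENNReal.ofReal Ben.toReal :=
                    ENNReal.ofReal_le_ofReal (by linarith)
                _ = Ben := ENNReal.ofReal_toReal hBtop
          calc ENNReal.ofReal (dist (z j) b.2)
              ≤ ENNReal.ofReal ((dist a.2 b.2 - A) + 2 * δ0) :=
                ENNReal.ofReal_le_ofReal (by linarith)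
            _ ≤ ENNReal.ofReal (dist a.2 b.2 - A) + ENNReal.ofReal (2 * δ0) :=
                ENNReal.ofReal_add_le
            _ ≤ Ben + ∫⁻ u in Set.Ioc (a.1 + θ - ε / 2) (a.1 + θ),
                  ENNReal.ofReal ((f u)⁻¹) := add_le_add hBA hlow
            _ = (∫⁻ u in Set.Ioc (a.1 + θ - ε / 2) (a.1 + θ),
                  ENNReal.ofReal ((f u)⁻¹)) + Ben := add_comm _ _
      have hcaus2 : WPCausal f ((a.1 + θ - ε / 2 : ℝ), z j) b :=
        ⟨show a.1 + θ - ε / 2 ≤ b.1 by linarith, hkey⟩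
      have h2 : |b.1 - (a.1 + θ - ε / 2)| ∈ CL I f ((a.1 + θ - ε / 2 : ℝ), z j) b :=
        single_mem hm' hb (Or.inl hcaus2)
      have := nullDist_le_of_mem (append_mem h1 h2)
      rw [show (a.1 + θ - ε / 2) - (a.1 + θ) = -(ε / 2) by ring, abs_neg,
        abs_of_nonneg (by linarith : (0:ℝ) ≤ ε / 2),
        abs_of_nonneg (by linarith : (0:ℝ) ≤ b.1 - (a.1 + θ - ε / 2))] at this
      linarith

lemma midpoint_aux (hX : ∀ x y : X, ∀ ε : ℝ, 0 < ε →
      ∃ z : X, max (dist x z) (dist z y) ≤ dist x y / 2 + ε)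
    {I : Set ℝ} {f : ℝ → ℝ} {fmin fmax : ℝ} (hIc : I.OrdConnected)
    (hInd : ∃ a ∈ I, ∃ b ∈ I, a < b) (hmin : 0 < fmin) (hfmax : 0 < fmax)
    (hbd : ∀ t ∈ I, fmin ≤ f t ∧ f t ≤ fmax) {p q : ℝ × X}
    (hp : p.1 ∈ I) (hq : q.1 ∈ I) {ε : ℝ} (hε : 0 < ε) :
    ∃ m : ℝ × X, m.1 ∈ I ∧
      max (nullDist I f p m) (nullDist I f m q) ≤ nullDist I f p q / 2 + ε := by
  classical
  have tri : ∀ x y w : ℝ × X, x.1 ∈ I → y.1 ∈ I → w.1 ∈ I →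
      nullDist I f x w ≤ nullDist I f x y + nullDist I f y w := fun x y w hx hy hw =>
    nullDist_triangle (CL_nonempty hX hIc hInd hmin hfmax hbd hx hy)
      (CL_nonempty hX hIc hInd hmin hfmax hbd hy hw)
  have hne := CL_nonempty hX hIc hInd hmin hfmax hbd hp hq
  obtain ⟨L, hLmem, hLlt⟩ := Real.lt_sInf_add_pos hne (half_pos hε)
  have hL : L < nullDist I f p q + ε / 2 := hLlt
  obtain ⟨n, σ, ⟨hσ0, hσe, hσI, hσc⟩, hLsum⟩ := hLmem
  set g : ℕ → ℝ := fun j => ∑ i ∈ Finset.range j, |(σ (i + 1)).1 - (σ i).1| with hgdef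
  have hgL : g (n + 1) = L := by rw [hgdef]; exact hLsum.symm
  have hL0 : 0 ≤ L := by
    rw [hLsum]
    exact Finset.sum_nonneg fun i _ => abs_nonneg _
  set j : ℕ := Nat.findGreatest (fun j => g j ≤ L / 2) n with hjdef
  have hjn : j ≤ n := Nat.findGreatest_le n
  have hgj : g j ≤ L / 2 := by
    have h0 : (fun i => g i ≤ L / 2) 0 := by
      show g 0 ≤ L / 2
      rw [hgdef]
      simpa using by linarith
    have h1 := Nat.findGreatest_spec (P := fun i => g i ≤ L / 2) (Nat.zero_le n) h0
    rw [← hjdef] at h1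
    exact h1
  have hgsucc : g (j + 1) = g j + |(σ (j + 1)).1 - (σ j).1| := by
    rw [hgdef]
    exact Finset.sum_range_succ _ _
  have hgj1 : L / 2 ≤ g (j + 1) := by
    rcases Nat.lt_or_ge j n with hjlt | hjge
    · have hnot : ¬ (g (j + 1) ≤ L / 2) :=
        Nat.findGreatest_is_greatest (Nat.lt_succ_self j) (by omega)
      linarith [not_le.mp hnot]
    · have hjn' : j = n := le_antisymm hjn hjge
      rw [hjn', hgL]
      linarith
  have ha : (σ j).1 ∈ I := hσI j (by omega)
  have hb1 : (σ (j + 1)).1 ∈ I := hσI (j + 1) (by omega)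
  set θ : ℝ := L / 2 - g j with hθdef
  have hθ0 : 0 ≤ θ := by rw [hθdef]; linarith
  have hθle : θ ≤ |(σ (j + 1)).1 - (σ j).1| := by rw [hθdef]; linarith
  -- distance from p to σ j along the chain
  have hpre : nullDist I f p (σ j) ≤ g j := by
    rcases Nat.eq_zero_or_pos j with h0 | h0
    · rw [h0, hσ0, nullDist_self hp, hgdef]
      simp
    · obtain ⟨j', hj'⟩ : ∃ j', j = j' + 1 := ⟨j - 1, by omega⟩
      apply nullDist_le_of_mem
      refine ⟨j', σ, ⟨hσ0, by rw [hj'], fun i hi => hσI i (by omega),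
        fun i hi => hσc i (by omega)⟩, ?_⟩
      rw [hgdef, hj']
  -- distance from σ (j+1) to q along the chain
  have hsuf : nullDist I f (σ (j + 1)) q ≤ L - g (j + 1) := by
    rcases Nat.lt_or_ge j n with hjlt | hjge
    · apply nullDist_le_of_mem
      refine ⟨n - (j + 1), fun i => σ (i + (j + 1)), ⟨by simp, ?_, fun i hi => hσI _ (by omega),
        fun i hi => ?_⟩, ?_⟩
      · show σ (n - (j + 1) + 1 + (j + 1)) = q
        rw [show n - (j + 1) + 1 + (j + 1) = n + 1 by omega]
        exact hσe
      · show WPCausal f (σ (i + (j + 1))) (σ ((i + 1) + (j + 1)))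
          ∨ WPCausal f (σ ((i + 1) + (j + 1))) (σ (i + (j + 1)))
        rw [show (i + 1) + (j + 1) = i + (j + 1) + 1 by omega]
        exact hσc (i + (j + 1)) (by omega)
      · have hs := sum_range_add' (fun i => |(σ (i + 1)).1 - (σ i).1|) (j + 1) (n - j)
        rw [show (j + 1) + (n - j) = n + 1 by omega] at hs
        have h1 : L = g (j + 1)
            + ∑ i ∈ Finset.range (n - j), |(σ ((j + 1) + i + 1)).1 - (σ ((j + 1) + i)).1| := by
          rw [hLsum, hgdef]
          exact hs
        rw [show n - (j + 1) + 1 = n - j by omega, h1, add_sub_cancel_left]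
        refine Finset.sum_congr rfl fun i _ => ?_
        show |(σ ((j + 1) + i + 1)).1 - (σ ((j + 1) + i)).1|
          = |(σ ((i + 1) + (j + 1))).1 - (σ (i + (j + 1))).1|
        rw [show (j + 1) + i + 1 = (i + 1) + (j + 1) by omega,
          show (j + 1) + i = i + (j + 1) by omega]
    · have hjn' : j = n := le_antisymm hjn hjge
      rw [hjn', hσe, nullDist_self hq]
      linarith [hgL]
  clear_value g j θ
  have hεpos2 : (0 : ℝ) < ε / 2 := half_pos hε
  rcases hσc j hjn with hcf | hcr
  · -- forward causal segment
    have habs : |(σ (j + 1)).1 - (σ j).1| = (σ (j + 1)).1 - (σ j).1 :=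
      abs_of_nonneg (by linarith [hcf.1])
    obtain ⟨m, hmI, h1, h2⟩ := split hX hIc hmin hfmax hbd ha hb1 hcf hθ0
      (by rw [habs] at hθle; exact hθle) hεpos2
    refine ⟨m, hmI, max_le ?_ ?_⟩
    · have := tri p (σ j) m hp ha hmI
      have hsum2 : g j + θ = L / 2 := by rw [hθdef]; ring
      linarith
    · have := tri m (σ (j + 1)) q hmI hb1 hq
      have hδt : (σ (j + 1)).1 - (σ j).1 = g (j + 1) - g j := by
        rw [hgsucc, habs]; ring
      linarith
  · -- backward causal segment
    have habs : |(σ (j + 1)).1 - (σ j).1| = (σ j).1 - (σ (j + 1)).1 := by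
      rw [abs_sub_comm]
      exact abs_of_nonneg (by linarith [hcr.1])
    set θ' : ℝ := ((σ j).1 - (σ (j + 1)).1) - θ with hθ'def
    have hθ'0 : 0 ≤ θ' := by rw [hθ'def]; rw [habs] at hθle; linarith
    have hθ'le : θ' ≤ (σ j).1 - (σ (j + 1)).1 := by rw [hθ'def]; linarith
    clear_value θ'
    obtain ⟨m, hmI, h1, h2⟩ := split hX hIc hmin hfmax hbd hb1 ha hcr hθ'0 hθ'le hεpos2
    have h2' : nullDist I f (σ j) m ≤ θ + ε / 2 := by
      rw [nullDist_comm]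
      calc nullDist I f m (σ j) ≤ ((σ j).1 - (σ (j + 1)).1 - θ') + ε / 2 := h2
        _ = θ + ε / 2 := by rw [hθ'def]; ring
    have h1' : nullDist I f m (σ (j + 1)) ≤ θ' + ε / 2 := by
      rw [nullDist_comm]; exact h1
    refine ⟨m, hmI, max_le ?_ ?_⟩
    · have := tri p (σ j) m hp ha hmI
      have hsum2 : g j + θ = L / 2 := by rw [hθdef]; ring
      linarith
    · have := tri m (σ (j + 1)) q hmI hb1 hq
      have hδt : (σ j).1 - (σ (j + 1)).1 = g (j + 1) - g j := by
        rw [hgsucc, habs]; ring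
      have hθ'val : θ' = g (j + 1) - g j - θ := by rw [hθ'def, hδt]
      linarith

end NDAux

/-- for a length space `X`, a nondegenerate interval `I` and a continuous
warping function `f` with `0 < fmin ≤ f ≤ fmax` on `I`, the null distance of the warped
product `I ×_f X` is a metric and `(I × X, d̂_f)` is a length space (approximate midpoints). -/
theorem stmt0 {X : Type*} [MetricSpace X]
    (hX : ∀ x y : X, ∀ ε : ℝ, 0 < ε →
      ∃ z : X, max (dist x z) (dist z y) ≤ dist x y / 2 + ε)
    (I : Set ℝ) (hIc : I.OrdConnected) (hInd : ∃ a ∈ I, ∃ b ∈ I, a < b)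
    (f : ℝ → ℝ) (hf : ContinuousOn f I)
    (fmin fmax : ℝ) (hmin : 0 < fmin)
    (hbd : ∀ t ∈ I, fmin ≤ f t ∧ f t ≤ fmax) :
    (∀ p q : ℝ × X, p.1 ∈ I → q.1 ∈ I → 0 ≤ nullDist I f p q) ∧
    (∀ p q : ℝ × X, p.1 ∈ I → q.1 ∈ I → (nullDist I f p q = 0 ↔ p = q)) ∧
    (∀ p q : ℝ × X, p.1 ∈ I → q.1 ∈ I → nullDist I f p q = nullDist I f q p) ∧
    (∀ p q r : ℝ × X, p.1 ∈ I → q.1 ∈ I → r.1 ∈ I →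
      nullDist I f p r ≤ nullDist I f p q + nullDist I f q r) ∧
    (∀ p q : ℝ × X, p.1 ∈ I → q.1 ∈ I → ∀ ε : ℝ, 0 < ε →
      ∃ m : ℝ × X, m.1 ∈ I ∧
        max (nullDist I f p m) (nullDist I f m q) ≤ nullDist I f p q / 2 + ε) := by
  have hfmax : 0 < fmax := by
    obtain ⟨a, ha, -, -, -⟩ := hInd
    exact lt_of_lt_of_le hmin ((hbd a ha).1.trans (hbd a ha).2)
  have hbd1 : ∀ t ∈ I, fmin ≤ f t := fun t ht => (hbd t ht).1
  refine ⟨fun p q _ _ => NDAux.nullDist_nonneg, ?_, fun p q _ _ => NDAux.nullDist_comm f p q,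
    ?_, ?_⟩
  · intro p q hp hq
    constructor
    · intro h0
      have hne := NDAux.CL_nonempty hX hIc hInd hmin hfmax hbd hp hq
      have h1 : |q.1 - p.1| ≤ nullDist I f p q := by
        rw [NDAux.nullDist_def]
        exact le_csInf hne fun r hr => (NDAux.chain_lb hIc hmin hbd1 hr).1
      have h2 : fmin * dist p.2 q.2 ≤ nullDist I f p q := by
        rw [NDAux.nullDist_def]
        exact le_csInf hne fun r hr => (NDAux.chain_lb hIc hmin hbd1 hr).2
      rw [h0] at h1 h2
      have ht : p.1 = q.1 := by
        have h3 : |q.1 - p.1| = 0 := le_antisymm h1 (abs_nonneg _)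
        have h4 := abs_eq_zero.mp h3
        linarith
      have hd : p.2 = q.2 := by
        have h5 : dist p.2 q.2 ≤ 0 := by nlinarith [dist_nonneg (x := p.2) (y := q.2)]
        exact dist_le_zero.mp h5
      exact Prod.ext ht hd
    · rintro rfl
      exact NDAux.nullDist_self hp
  · intro p q r hp hq hr
    exact NDAux.nullDist_triangle (NDAux.CL_nonempty hX hIc hInd hmin hfmax hbd hp hq)
      (NDAux.CL_nonempty hX hIc hInd hmin hfmax hbd hq hr)
  · intro p q hp hq ε hε
    exact NDAux.midpoint_aux hX hIc hInd hmin hfmax hbd hp hq hε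
end

section
/- Let X be a complete length space, let I ⊆ ℝ be a closed nondegenerate interval, and let f : I → ℝ be measurable with 0 < f_min ≤ f(t) ≤ f_max < ∞ for all t ∈ I. Then the null distance d̂_f of the warped product I ×_f X is a metric on I × X and the metric space (I × X, d̂_f) is complete. (Instance, for warped product spacetimes, of the theorem that a time function which is anti-Lipschitz with respect to a complete Riemannian metric yields a complete null distance.) -/
open MeasureTheory

lemma lint_upper {I : Set ℝ} {f : ℝ → ℝ} {fmin : ℝ} (hmin : 0 < fmin)
    (hlb : ∀ t ∈ I, fmin ≤ f t) {s t : ℝ} (hsub : Set.Ioc s t ⊆ I) :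
    ∫⁻ u in Set.Ioc s t, ENNReal.ofReal ((f u)⁻¹) ≤ ENNReal.ofReal ((t - s) / fmin) := by
  have h1 : ∫⁻ u in Set.Ioc s t, ENNReal.ofReal ((f u)⁻¹)
      ≤ ∫⁻ _ in Set.Ioc s t, ENNReal.ofReal (fmin⁻¹) := by
    refine setLIntegral_mono measurable_const (fun u hu => ?_)
    exact ENNReal.ofReal_le_ofReal (inv_anti₀ hmin (hlb u (hsub hu)))
  refine h1.trans ?_
  rw [setLIntegral_const, Real.volume_Ioc, ← ENNReal.ofReal_mul (by positivity)]
  rw [div_eq_mul_inv, mul_comm]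

lemma lint_lower {I : Set ℝ} {f : ℝ → ℝ} (hf : Measurable f) {fmin fmax : ℝ}
    (hmin : 0 < fmin) (hmax : 0 < fmax)
    (hbd : ∀ t ∈ I, fmin ≤ f t ∧ f t ≤ fmax) {s t : ℝ} (hsub : Set.Ioc s t ⊆ I) :
    ENNReal.ofReal ((t - s) / fmax) ≤ ∫⁻ u in Set.Ioc s t, ENNReal.ofReal ((f u)⁻¹) := by
  have h1 : ∫⁻ _ in Set.Ioc s t, ENNReal.ofReal (fmax⁻¹)
      ≤ ∫⁻ u in Set.Ioc s t, ENNReal.ofReal ((f u)⁻¹) := by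
    refine setLIntegral_mono (by measurability) (fun u hu => ?_)
    exact ENNReal.ofReal_le_ofReal
      (inv_anti₀ (hmin.trans_le (hbd u (hsub hu)).1) (hbd u (hsub hu)).2)
  refine le_trans (le_of_eq ?_) h1
  rw [setLIntegral_const, Real.volume_Ioc, ← ENNReal.ofReal_mul (by positivity)]
  rw [div_eq_mul_inv, mul_comm]

lemma ioc_sub {I : Set ℝ} (hIc : I.OrdConnected) {s t : ℝ} (hs : s ∈ I) (ht : t ∈ I) :
    Set.Ioc s t ⊆ I :=
  (Set.Ioc_subset_Icc_self).trans (hIc.out hs ht)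

lemma step_dist {X : Type*} [MetricSpace X] {I : Set ℝ} (hIc : I.OrdConnected)
    {f : ℝ → ℝ} {fmin : ℝ} (hmin : 0 < fmin) (hlb : ∀ t ∈ I, fmin ≤ f t)
    {a b : ℝ × X} (ha : a.1 ∈ I) (hb : b.1 ∈ I)
    (h : WPCausal f a b ∨ WPCausal f b a) :
    dist a.2 b.2 ≤ |b.1 - a.1| / fmin := by
  rcases h with ⟨h1, h2⟩ | ⟨h1, h2⟩
  · have := h2.trans (lint_upper hmin hlb (ioc_sub hIc ha hb))
    rw [ENNReal.ofReal_le_ofReal_iff (div_nonneg (sub_nonneg.2 h1) hmin.le)] at this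
    rwa [abs_of_nonneg (sub_nonneg.2 h1)]
  · have := h2.trans (lint_upper hmin hlb (ioc_sub hIc hb ha))
    rw [ENNReal.ofReal_le_ofReal_iff (div_nonneg (sub_nonneg.2 h1) hmin.le)] at this
    rw [abs_sub_comm, abs_of_nonneg (sub_nonneg.2 h1), dist_comm]
    exact this

lemma step_causal {X : Type*} [MetricSpace X] {I : Set ℝ} (hIc : I.OrdConnected)
    {f : ℝ → ℝ} (hf : Measurable f) {fmin fmax : ℝ}
    (hmin : 0 < fmin) (hmax : 0 < fmax) (hbd : ∀ t ∈ I, fmin ≤ f t ∧ f t ≤ fmax)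
    {a b : ℝ × X} (ha : a.1 ∈ I) (hb : b.1 ∈ I)
    (h : dist a.2 b.2 ≤ |b.1 - a.1| / fmax) :
    WPCausal f a b ∨ WPCausal f b a := by
  rcases le_total a.1 b.1 with hle | hle
  · left
    refine ⟨hle, le_trans ?_ (lint_lower hf hmin hmax hbd (ioc_sub hIc ha hb))⟩
    refine ENNReal.ofReal_le_ofReal ?_
    rwa [abs_of_nonneg (sub_nonneg.2 hle)] at h
  · right
    refine ⟨hle, le_trans ?_ (lint_lower hf hmin hmax hbd (ioc_sub hIc hb ha))⟩
    refine ENNReal.ofReal_le_ofReal ?_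
    rw [dist_comm]
    rwa [abs_sub_comm, abs_of_nonneg (sub_nonneg.2 hle)] at h

lemma chain_bounds {X : Type*} [MetricSpace X] {I : Set ℝ} (hIc : I.OrdConnected)
    {f : ℝ → ℝ} {fmin : ℝ} (hmin : 0 < fmin) (hlb : ∀ t ∈ I, fmin ≤ f t)
    {p q : ℝ × X} {n : ℕ} {σ : ℕ → ℝ × X} (hc : WPChain I f p q n σ) :
    |q.1 - p.1| ≤ (∑ i ∈ Finset.range (n + 1), |(σ (i + 1)).1 - (σ i).1|) ∧
    fmin * dist p.2 q.2 ≤ (∑ i ∈ Finset.range (n + 1), |(σ (i + 1)).1 - (σ i).1|) := by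
  obtain ⟨h0, hn, hmem, hstep⟩ := hc
  set S := ∑ i ∈ Finset.range (n + 1), |(σ (i + 1)).1 - (σ i).1| with hS
  constructor
  · have htel := Finset.sum_range_sub (fun i => (σ i).1) (n + 1)
    have := Finset.abs_sum_le_sum_abs (fun i => (σ (i + 1)).1 - (σ i).1) (Finset.range (n + 1))
    rw [htel, h0, hn] at this
    exact this
  · have hd : dist p.2 q.2 ≤ ∑ i ∈ Finset.range (n + 1), dist (σ i).2 (σ (i + 1)).2 := by
      rw [← h0, ← hn]
      exact dist_le_range_sum_dist (fun i => (σ i).2) (n + 1)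
    have hsum : ∑ i ∈ Finset.range (n + 1), dist (σ i).2 (σ (i + 1)).2 ≤ S / fmin := by
      rw [hS, Finset.sum_div]
      refine Finset.sum_le_sum (fun i hi => ?_)
      have hi' := Nat.lt_succ_iff.1 (Finset.mem_range.1 hi)
      exact step_dist hIc hmin hlb (hmem i (le_trans hi' (Nat.le_succ n)))
        (hmem (i + 1) (Nat.succ_le_succ hi')) (hstep i hi')
    calc fmin * dist p.2 q.2 ≤ fmin * (S / fmin) :=
          mul_le_mul_of_nonneg_left (hd.trans hsum) hmin.le
      _ = S := mul_div_cancel₀ S hmin.ne'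

lemma subdiv {X : Type*} [MetricSpace X]
    (hX : ∀ x y : X, ∀ ε : ℝ, 0 < ε →
      ∃ z : X, max (dist x z) (dist z y) ≤ dist x y / 2 + ε) :
    ∀ (k : ℕ) (x y : X) (ε : ℝ), 0 < ε →
      ∃ g : ℕ → X, g 0 = x ∧ g (2 ^ k) = y ∧
        ∀ i < 2 ^ k, dist (g i) (g (i + 1)) ≤ dist x y / 2 ^ k + ε := by
  intro k
  induction k with
  | zero =>
    intro x y ε hε
    refine ⟨fun i => if i = 0 then x else y, rfl, rfl, ?_⟩
    intro i hi
    interval_cases i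
    norm_num
    linarith
  | succ k ih =>
    intro x y ε hε
    have hP : (0:ℝ) < 2 ^ k := by positivity
    obtain ⟨z, hz⟩ := hX x y ((ε / 2) * 2 ^ k) (by positivity)
    have hxz : dist x z ≤ dist x y / 2 + (ε / 2) * 2 ^ k := (max_le_iff.1 hz).1
    have hzy : dist z y ≤ dist x y / 2 + (ε / 2) * 2 ^ k := (max_le_iff.1 hz).2
    obtain ⟨g₁, hg₁0, hg₁n, hg₁⟩ := ih x z (ε / 2) (by positivity)
    obtain ⟨g₂, hg₂0, hg₂n, hg₂⟩ := ih z y (ε / 2) (by positivity)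
    have hNpos : 0 < 2 ^ k := by positivity
    have h2 : 2 ^ (k + 1) = 2 ^ k + 2 ^ k := by rw [pow_succ]; omega
    refine ⟨fun i => if i < 2 ^ k then g₁ i else g₂ (i - 2 ^ k), ?_, ?_, ?_⟩
    · simp only [if_pos hNpos, hg₁0]
    · rw [h2]
      simp only [if_neg (by omega : ¬ (2 ^ k + 2 ^ k < 2 ^ k))]
      rw [(by omega : 2 ^ k + 2 ^ k - 2 ^ k = 2 ^ k), hg₂n]
    · intro i hi
      have key : ∀ w : X, dist w z ≤ dist x z ∨ dist w z ≤ 0 → True := fun _ _ => trivial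
      have hbound : ∀ dxz : ℝ, dxz ≤ dist x y / 2 + (ε / 2) * 2 ^ k →
          dxz / 2 ^ k + ε / 2 ≤ dist x y / 2 ^ (k + 1) + ε := by
        intro dxz h
        have h1 : dxz / 2 ^ k ≤ (dist x y / 2 + (ε / 2) * 2 ^ k) / 2 ^ k := by gcongr
        have h2' : (dist x y / 2 + (ε / 2) * 2 ^ k) / 2 ^ k
            = dist x y / 2 ^ (k + 1) + ε / 2 := by
          rw [pow_succ]
          field_simp
        rw [h2'] at h1
        linarith
      by_cases hlt : i < 2 ^ k
      · have hgi : (if i < 2 ^ k then g₁ i else g₂ (i - 2 ^ k)) = g₁ i := if_pos hlt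
        have hgi1 : (if i + 1 < 2 ^ k then g₁ (i + 1) else g₂ (i + 1 - 2 ^ k)) = g₁ (i + 1) := by
          by_cases h' : i + 1 < 2 ^ k
          · exact if_pos h'
          · have heq : i + 1 = 2 ^ k := by omega
            rw [if_neg h', heq]
            simp only [Nat.sub_self, hg₂0, hg₁n]
        simp only [hgi, hgi1]
        exact (hg₁ i hlt).trans (hbound _ hxz)
      · have hgi : (if i < 2 ^ k then g₁ i else g₂ (i - 2 ^ k)) = g₂ (i - 2 ^ k) := if_neg hlt
        have hgi1 : (if i + 1 < 2 ^ k then g₁ (i + 1) else g₂ (i + 1 - 2 ^ k))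
            = g₂ (i - 2 ^ k + 1) := by
          rw [if_neg (by omega), (by omega : i + 1 - 2 ^ k = i - 2 ^ k + 1)]
        simp only [hgi, hgi1]
        refine (hg₂ (i - 2 ^ k) (by rw [h2] at hi; omega)).trans (hbound _ hzy)

lemma exists_other {I : Set ℝ} (hIc : I.OrdConnected) {a b : ℝ} (ha : a ∈ I) (hb : b ∈ I)
    {m δ : ℝ} (hm : m ∈ I) (hδ : 0 < δ) (hδ2 : 2 * δ ≤ b - a) :
    ∃ o ∈ I, |o - m| = δ := by
  by_cases h : m ≤ b - δ
  · refine ⟨m + δ, hIc.out hm hb ⟨by linarith, by linarith⟩, ?_⟩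
    rw [add_sub_cancel_left, abs_of_pos hδ]
  · refine ⟨m - δ, hIc.out ha hm ⟨by linarith, by linarith⟩, ?_⟩
    rw [sub_sub_cancel_left, abs_neg, abs_of_pos hδ]

lemma chain_exists {X : Type*} [MetricSpace X]
    (hX : ∀ x y : X, ∀ ε : ℝ, 0 < ε →
      ∃ z : X, max (dist x z) (dist z y) ≤ dist x y / 2 + ε)
    {I : Set ℝ} (hIc : I.OrdConnected) {a b : ℝ} (ha : a ∈ I) (hb : b ∈ I) (hab : a < b)
    {f : ℝ → ℝ} (hf : Measurable f) {fmin fmax : ℝ}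
    (hmin : 0 < fmin) (hmax : 0 < fmax) (hbd : ∀ t ∈ I, fmin ≤ f t ∧ f t ≤ fmax)
    (p q : ℝ × X) (hp : p.1 ∈ I) (hq : q.1 ∈ I) {ε : ℝ} (hε : 0 < ε) :
    ∃ n σ, WPChain I f p q n σ ∧
      (∑ i ∈ Finset.range (n + 1), |(σ (i + 1)).1 - (σ i).1|)
        ≤ |q.1 - p.1| + fmax * dist p.2 q.2 + ε := by
  set d := dist p.2 q.2 with hd
  have hd0 : 0 ≤ d := dist_nonneg
  set c0 : ℝ := min ((b - a) / 4) (ε / 4) with hc0def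
  have hc0 : 0 < c0 := lt_min (by linarith) (by linarith)
  obtain ⟨k, hk⟩ := exists_nat_gt (fmax * d / c0)
  have hP : (0:ℝ) < 2 ^ k := by positivity
  have hkP : (k : ℝ) < 2 ^ k := by exact_mod_cast Nat.lt_two_pow_self
  have hkd : fmax * d / 2 ^ k < c0 := by
    rw [div_lt_iff₀ hP]
    have h1 : fmax * d < c0 * k := by
      have h2 := (div_lt_iff₀ hc0).1 hk
      linarith
    calc fmax * d < c0 * k := h1
      _ ≤ c0 * 2 ^ k := by nlinarith
  set ε₁ : ℝ := c0 / (fmax * 2 ^ k) with hε₁def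
  have hε₁ : 0 < ε₁ := by positivity
  set per : ℝ := d / 2 ^ k + ε₁ with hperdef
  have hper : 0 < per := by positivity
  set δ : ℝ := fmax * per with hδdef
  have hδpos : 0 < δ := by positivity
  have h2k1 : (1:ℝ) ≤ 2 ^ k := by
    exact_mod_cast Nat.one_le_two_pow
  have hfe : fmax * ε₁ = c0 / 2 ^ k := by
    rw [hε₁def]; field_simp
  have hδlt : δ < 2 * c0 := by
    have h1 : c0 / 2 ^ k ≤ c0 := by
      rw [div_le_iff₀ hP]; nlinarith
    have : δ = fmax * d / 2 ^ k + fmax * ε₁ := by rw [hδdef, hperdef]; ring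
    rw [this, hfe]; linarith
  have hNδ : (2 ^ k : ℝ) * δ = fmax * d + c0 := by
    rw [hδdef, hperdef, hε₁def]
    field_simp
  obtain ⟨g, hg0, hgn, hg⟩ := subdiv hX k p.2 q.2 ε₁ hε₁
  obtain ⟨o, ho, hom⟩ := exists_other hIc ha hb hp hδpos
    (by
      have : 4 * c0 ≤ b - a := by
        have := min_le_left ((b - a) / 4) (ε / 4); rw [← hc0def] at this; linarith
      linarith)
  set N : ℕ := 2 ^ k with hNdef
  have hNR : ((N : ℝ)) = 2 ^ k := by rw [hNdef]; push_cast; ring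
  have hN1 : 1 ≤ N := by rw [hNdef]; exact Nat.one_le_two_pow
  clear_value N
  set tm : ℕ → ℝ := fun j => if Even j then p.1 else o with htm
  have htmI : ∀ j, tm j ∈ I := by
    intro j; rw [htm]; dsimp only; split <;> [exact hp; exact ho]
  have htmd : ∀ j, |tm (j + 1) - tm j| = δ := by
    intro j
    rcases Nat.even_or_odd j with hj | hj
    · have h1 : ¬ Even (j + 1) := by simp [Nat.even_add_one, hj]
      rw [htm]; dsimp only
      rw [if_neg h1, if_pos hj]
      exact hom
    · have h1 : Even (j + 1) := by simp [Nat.even_add_one, Nat.not_even_iff_odd.2 hj]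
      rw [htm]; dsimp only
      rw [if_pos h1, if_neg (Nat.not_even_iff_odd.2 hj)]
      rw [abs_sub_comm]; exact hom
  have htm0 : tm 0 = p.1 := by rw [htm]; simp
  have htms : ∀ j, |p.1 - tm j| ≤ δ := by
    intro j; rw [htm]; dsimp only; split
    · simp [hδpos.le]
    · rw [abs_sub_comm]; linarith [le_of_eq hom]
  set σ : ℕ → ℝ × X := fun i => if i = 0 then p else if i ≤ N + 1 then (tm (i - 1), g (i - 1)) else q
    with hσ
  have hσ0 : σ 0 = p := by simp [hσ]
  have hσmid : ∀ i, 1 ≤ i → i ≤ N + 1 → σ i = (tm (i - 1), g (i - 1)) := by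
    intro i h1 h2; rw [hσ]; dsimp only; rw [if_neg (by omega), if_pos h2]
  have hσlast : σ (N + 2) = q := by
    rw [hσ]; dsimp only; rw [if_neg (by omega), if_neg (by omega)]
  have hper_eq : per = δ / fmax := by
    rw [hδdef]; field_simp
  refine ⟨N + 1, σ, ⟨hσ0, hσlast, ?_, ?_⟩, ?_⟩
  · -- membership
    intro i hi
    rcases Nat.eq_zero_or_pos i with h0 | h0
    · rw [h0, hσ0]; exact hp
    · by_cases h1 : i ≤ N + 1
      · rw [hσmid i h0 h1]; exact htmI _
      · have : i = N + 2 := by omega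
        rw [this, hσlast]; exact hq
  · -- causality
    intro i hi
    have hmemi : (σ i).1 ∈ I := by
      rcases Nat.eq_zero_or_pos i with h0 | h0
      · rw [h0, hσ0]; exact hp
      · rw [hσmid i h0 (by omega)]; exact htmI _
    have hmemi1 : (σ (i + 1)).1 ∈ I := by
      by_cases h1 : i + 1 ≤ N + 1
      · rw [hσmid (i + 1) (by omega) h1]; exact htmI _
      · have : i + 1 = N + 2 := by omega
        rw [this, hσlast]; exact hq
    refine step_causal hIc hf hmin hmax hbd hmemi hmemi1 ?_
    rcases Nat.eq_zero_or_pos i with h0 | h0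
    · -- step 0 : p to (tm 0, g 0) = (p.1, p.2)
      rw [h0, hσ0, hσmid 1 le_rfl (by omega)]
      refine le_trans (le_of_eq ?_) (div_nonneg (abs_nonneg _) hmax.le)
      simp [hg0]
    · by_cases h1 : i ≤ N
      · rw [hσmid i h0 (by omega), hσmid (i + 1) (by omega) (by omega)]
        dsimp only
        have hi1 : i - 1 + 1 = i := by omega
        have hstep : dist (g (i - 1)) (g i) ≤ per := by
          have := hg (i - 1) (by omega)
          rw [hi1] at this
          rw [hperdef, hd]
          exact this
        have htd : |tm i - tm (i - 1)| = δ := by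
          have := htmd (i - 1); rwa [hi1] at this
        calc dist (g (i - 1)) (g i) ≤ per := hstep
          _ = δ / fmax := hper_eq
          _ = |tm i - tm (i - 1)| / fmax := by rw [htd]
      · -- i = N + 1 : (tm N, g N) to q, g N = q.2
        have : i = N + 1 := by omega
        subst this
        rw [hσmid (N + 1) (by omega) le_rfl, hσlast]
        refine le_trans (le_of_eq ?_) (div_nonneg (abs_nonneg _) hmax.le)
        simp [hgn]
  · -- sum bound
    have hsum : (∑ i ∈ Finset.range (N + 2), |(σ (i + 1)).1 - (σ i).1|)
        = (∑ i ∈ Finset.range N, |(σ (i + 2)).1 - (σ (i + 1)).1|)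
          + |(σ 1).1 - (σ 0).1| + |(σ (N + 2)).1 - (σ (N + 1)).1| := by
      rw [Finset.sum_range_succ, Finset.sum_range_succ']
    have h0term : |(σ 1).1 - (σ 0).1| = 0 := by
      rw [hσ0, hσmid 1 le_rfl (by omega)]
      simp [htm0]
    have hlastterm : |(σ (N + 2)).1 - (σ (N + 1)).1| ≤ |q.1 - p.1| + δ := by
      rw [hσlast, hσmid (N + 1) (by omega) le_rfl]
      simp only [Nat.add_sub_cancel]
      calc |q.1 - tm N| ≤ |q.1 - p.1| + |p.1 - tm N| := abs_sub_le _ _ _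
        _ ≤ |q.1 - p.1| + δ := by linarith [htms N]
    have hmidterm : ∀ i ∈ Finset.range N, |(σ (i + 2)).1 - (σ (i + 1)).1| = δ := by
      intro i hi
      have hiN := Finset.mem_range.1 hi
      rw [hσmid (i + 1) (by omega) (by omega), hσmid (i + 2) (by omega) (by omega)]
      simp only [Nat.add_sub_cancel]
      have : i + 2 - 1 = i + 1 := by omega
      rw [this]
      exact htmd i
    have hmid : (∑ i ∈ Finset.range N, |(σ (i + 2)).1 - (σ (i + 1)).1|) = N * δ := by
      rw [Finset.sum_congr rfl hmidterm, Finset.sum_const, Finset.card_range, nsmul_eq_mul]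
    rw [hsum, h0term, hmid, add_zero]
    have hc0ε : c0 ≤ ε / 4 := min_le_right _ _
    have : (N : ℝ) * δ = fmax * d + c0 := by rw [hNR]; exact hNδ
    rw [this]
    linarith [hδlt, hlastterm]

lemma chain_rev {X : Type*} [MetricSpace X] {I : Set ℝ} {f : ℝ → ℝ}
    {p q : ℝ × X} {n : ℕ} {σ : ℕ → ℝ × X} (hc : WPChain I f p q n σ) :
    WPChain I f q p n (fun i => σ (n + 1 - i)) ∧
      (∑ i ∈ Finset.range (n + 1), |(σ (n + 1 - (i + 1))).1 - (σ (n + 1 - i)).1|)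
        = ∑ i ∈ Finset.range (n + 1), |(σ (i + 1)).1 - (σ i).1| := by
  obtain ⟨h0, hn, hmem, hstep⟩ := hc
  constructor
  · refine ⟨by simpa using hn, by simpa using h0, fun i hi => hmem _ (by omega), fun i hi => ?_⟩
    have hj : n + 1 - i = (n - i) + 1 := by omega
    have hj2 : n + 1 - (i + 1) = n - i := by omega
    dsimp only
    rw [hj, hj2]
    exact (hstep (n - i) (by omega)).symm
  · have hcongr : ∀ i ∈ Finset.range (n + 1),
        |(σ (n + 1 - (i + 1))).1 - (σ (n + 1 - i)).1|
          = (fun j => |(σ (j + 1)).1 - (σ j).1|) (n + 1 - 1 - i) := by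
      intro i hi
      have hi' := Finset.mem_range.1 hi
      have h1 : n + 1 - (i + 1) = n - i := by omega
      have h2 : n + 1 - i = (n - i) + 1 := by omega
      have h3 : n + 1 - 1 - i = n - i := by omega
      rw [h1, h2, h3, abs_sub_comm]
    rw [Finset.sum_congr rfl hcongr]
    exact Finset.sum_range_reflect (fun j => |(σ (j + 1)).1 - (σ j).1|) (n + 1)

lemma chain_concat {X : Type*} [MetricSpace X] {I : Set ℝ} {f : ℝ → ℝ}
    {p q r : ℝ × X} {n m : ℕ} {σ τ : ℕ → ℝ × X}
    (hcσ : WPChain I f p q n σ) (hcτ : WPChain I f q r m τ) :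
    WPChain I f p r (n + m + 1) (fun i => if i ≤ n + 1 then σ i else τ (i - (n + 1))) ∧
      (∑ i ∈ Finset.range (n + m + 2),
        |((fun i => if i ≤ n + 1 then σ i else τ (i - (n + 1))) (i + 1)).1
          - ((fun i => if i ≤ n + 1 then σ i else τ (i - (n + 1))) i).1|)
        = (∑ i ∈ Finset.range (n + 1), |(σ (i + 1)).1 - (σ i).1|)
          + ∑ i ∈ Finset.range (m + 1), |(τ (i + 1)).1 - (τ i).1| := by
  obtain ⟨hσ0, hσn, hσmem, hσstep⟩ := hcσ
  obtain ⟨hτ0, hτn, hτmem, hτstep⟩ := hcτ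
  set ρ : ℕ → ℝ × X := fun i => if i ≤ n + 1 then σ i else τ (i - (n + 1)) with hρ
  have hρσ : ∀ i ≤ n + 1, ρ i = σ i := fun i hi => if_pos hi
  have hρτ : ∀ i, n + 1 ≤ i → ρ i = τ (i - (n + 1)) := by
    intro i hi
    rcases eq_or_lt_of_le hi with h | h
    · rw [hρ]; dsimp only
      rw [if_pos (le_of_eq h.symm), ← h, Nat.sub_self, hτ0, ← hσn, h]
    · rw [hρ]; dsimp only; rw [if_neg (by omega)]
  constructor
  · refine ⟨by rw [hρσ 0 (by omega), hσ0], ?_, ?_, ?_⟩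
    · rw [hρτ (n + m + 1 + 1) (by omega), (by omega : n + m + 1 + 1 - (n + 1) = m + 1), hτn]
    · intro i hi
      by_cases h1 : i ≤ n + 1
      · rw [hρσ i h1]; exact hσmem i h1
      · rw [hρτ i (by omega)]; exact hτmem _ (by omega)
    · intro i hi
      by_cases h1 : i ≤ n
      · rw [hρσ i (by omega), hρσ (i + 1) (by omega)]; exact hσstep i h1
      · rw [hρτ i (by omega), hρτ (i + 1) (by omega),
          (by omega : i + 1 - (n + 1) = (i - (n + 1)) + 1)]
        exact hτstep (i - (n + 1)) (by omega)
  · have hsplit := Finset.sum_range_add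
      (fun i => |(ρ (i + 1)).1 - (ρ i).1|) (n + 1) (m + 1)
    rw [(by omega : n + m + 2 = (n + 1) + (m + 1))]
    rw [hsplit]
    congr 1
    · refine Finset.sum_congr rfl (fun i hi => ?_)
      have hi' := Finset.mem_range.1 hi
      rw [hρσ i (by omega), hρσ (i + 1) (by omega)]
    · refine Finset.sum_congr rfl (fun i hi => ?_)
      have hi' := Finset.mem_range.1 hi
      rw [hρτ (n + 1 + i) (by omega), hρτ (n + 1 + i + 1) (by omega),
        (by omega : n + 1 + i - (n + 1) = i), (by omega : n + 1 + i + 1 - (n + 1) = i + 1)]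

/-- for a complete length space `X`, a closed nondegenerate interval `I` and a
measurable warping function `f` with `0 < fmin ≤ f ≤ fmax` on `I`, the null distance of the
warped product `I ×_f X` is a metric on `I × X` and `(I × X, d̂_f)` is complete. -/
theorem stmt2 {X : Type*} [MetricSpace X] [CompleteSpace X]
    (hX : ∀ x y : X, ∀ ε : ℝ, 0 < ε →
      ∃ z : X, max (dist x z) (dist z y) ≤ dist x y / 2 + ε)
    (I : Set ℝ) (hIclosed : IsClosed I) (hIc : I.OrdConnected)
    (hInd : ∃ a ∈ I, ∃ b ∈ I, a < b)
    (f : ℝ → ℝ) (hf : Measurable f)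
    (fmin fmax : ℝ) (hmin : 0 < fmin)
    (hbd : ∀ t ∈ I, fmin ≤ f t ∧ f t ≤ fmax) :
    (∀ p q : ℝ × X, p.1 ∈ I → q.1 ∈ I → 0 ≤ nullDist I f p q) ∧
    (∀ p q : ℝ × X, p.1 ∈ I → q.1 ∈ I → (nullDist I f p q = 0 ↔ p = q)) ∧
    (∀ p q : ℝ × X, p.1 ∈ I → q.1 ∈ I → nullDist I f p q = nullDist I f q p) ∧
    (∀ p q r : ℝ × X, p.1 ∈ I → q.1 ∈ I → r.1 ∈ I →
      nullDist I f p r ≤ nullDist I f p q + nullDist I f q r) ∧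
    (∀ u : ℕ → ℝ × X, (∀ n, (u n).1 ∈ I) →
      (∀ ε : ℝ, 0 < ε → ∃ N, ∀ m ≥ N, ∀ n ≥ N, nullDist I f (u m) (u n) < ε) →
      ∃ p : ℝ × X, p.1 ∈ I ∧
        ∀ ε : ℝ, 0 < ε → ∃ N, ∀ n ≥ N, nullDist I f (u n) p < ε) := by
  obtain ⟨a, ha, b, hb, hab⟩ := hInd
  have hmax : 0 < fmax := hmin.trans_le ((hbd a ha).1.trans (hbd a ha).2)
  have hlb : ∀ t ∈ I, fmin ≤ f t := fun t ht => (hbd t ht).1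
  set D : ℝ × X → ℝ × X → Set ℝ := fun p q => { r | ∃ n σ, WPChain I f p q n σ ∧
    r = ∑ i ∈ Finset.range (n + 1), |(σ (i + 1)).1 - (σ i).1| } with hD
  have hndD : ∀ p q, nullDist I f p q = sInf (D p q) := fun _ _ => rfl
  have hbdd : ∀ p q, BddBelow (D p q) := by
    rintro p q
    refine ⟨0, ?_⟩
    rintro r ⟨n, σ, hc, rfl⟩
    exact Finset.sum_nonneg (fun i _ => abs_nonneg _)
  have hne : ∀ p q : ℝ × X, p.1 ∈ I → q.1 ∈ I → (D p q).Nonempty := by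
    intro p q hp hq
    obtain ⟨n, σ, hc, -⟩ := chain_exists hX hIc ha hb hab hf hmin hmax hbd p q hp hq one_pos
    exact ⟨_, n, σ, hc, rfl⟩
  have hnonneg : ∀ p q : ℝ × X, 0 ≤ nullDist I f p q := by
    intro p q
    rw [hndD]
    refine Real.sInf_nonneg ?_
    rintro r ⟨n, σ, hc, rfl⟩
    exact Finset.sum_nonneg (fun i _ => abs_nonneg _)
  have hlow1 : ∀ p q : ℝ × X, p.1 ∈ I → q.1 ∈ I → |q.1 - p.1| ≤ nullDist I f p q := by
    intro p q hp hq
    rw [hndD]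
    refine le_csInf (hne p q hp hq) ?_
    rintro r ⟨n, σ, hc, rfl⟩
    exact (chain_bounds hIc hmin hlb hc).1
  have hlow2 : ∀ p q : ℝ × X, p.1 ∈ I → q.1 ∈ I →
      fmin * dist p.2 q.2 ≤ nullDist I f p q := by
    intro p q hp hq
    rw [hndD]
    refine le_csInf (hne p q hp hq) ?_
    rintro r ⟨n, σ, hc, rfl⟩
    exact (chain_bounds hIc hmin hlb hc).2
  have hup : ∀ p q : ℝ × X, p.1 ∈ I → q.1 ∈ I →
      nullDist I f p q ≤ |q.1 - p.1| + fmax * dist p.2 q.2 := by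
    intro p q hp hq
    refine le_of_forall_pos_le_add (fun ε hε => ?_)
    obtain ⟨n, σ, hc, hs⟩ := chain_exists hX hIc ha hb hab hf hmin hmax hbd p q hp hq hε
    rw [hndD]
    calc sInf (D p q) ≤ _ := csInf_le (hbdd p q) ⟨n, σ, hc, rfl⟩
      _ ≤ |q.1 - p.1| + fmax * dist p.2 q.2 + ε := hs
  refine ⟨fun p q _ _ => hnonneg p q, ?_, ?_, ?_, ?_⟩
  · -- zero iff
    intro p q hp hq
    constructor
    · intro h
      have h1 := hlow1 p q hp hq
      have h2 := hlow2 p q hp hq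
      rw [h] at h1 h2
      have ht : q.1 = p.1 :=
        sub_eq_zero.1 (abs_eq_zero.1 (le_antisymm h1 (abs_nonneg _)))
      have hx2 : p.2 = q.2 := by
        have hd0 : dist p.2 q.2 ≤ 0 := by nlinarith [dist_nonneg (x := p.2) (y := q.2)]
        exact dist_le_zero.1 hd0
      exact Prod.ext ht.symm hx2
    · rintro rfl
      refine le_antisymm ?_ (hnonneg p p)
      rw [hndD]
      refine csInf_le (hbdd p p) ⟨0, fun _ => p, ⟨rfl, rfl, fun i _ => hp, fun i _ => ?_⟩, by simp⟩
      exact Or.inl ⟨le_rfl, by simp⟩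
  · -- symmetry
    have hsub : ∀ p q : ℝ × X, D p q ⊆ D q p := by
      rintro p q r ⟨n, σ, hc, rfl⟩
      obtain ⟨hc', hsum⟩ := chain_rev hc
      exact ⟨n, fun i => σ (n + 1 - i), hc', hsum.symm⟩
    intro p q hp hq
    rw [hndD, hndD]
    exact le_antisymm (csInf_le_csInf (hbdd p q) (hne q p hq hp) (hsub q p))
      (csInf_le_csInf (hbdd q p) (hne p q hp hq) (hsub p q))
  · -- triangle
    intro p q r hp hq hr
    have key : ∀ s₁ ∈ D p q, ∀ s₂ ∈ D q r, nullDist I f p r ≤ s₁ + s₂ := by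
      rintro s₁ ⟨n, σ, hcσ, rfl⟩ s₂ ⟨m, τ, hcτ, rfl⟩
      obtain ⟨hc, hsum⟩ := chain_concat hcσ hcτ
      rw [hndD]
      calc sInf (D p r) ≤ _ := csInf_le (hbdd p r) ⟨n + m + 1, _, hc, rfl⟩
        _ = _ := hsum
    have h1 : ∀ s₁ ∈ D p q, nullDist I f p r - s₁ ≤ nullDist I f q r := by
      intro s₁ hs₁
      rw [hndD q r]
      refine le_csInf (hne q r hq hr) (fun s₂ hs₂ => ?_)
      linarith [key s₁ hs₁ s₂ hs₂]
    have h2 : nullDist I f p r - nullDist I f q r ≤ nullDist I f p q := by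
      rw [hndD p q]
      refine le_csInf (hne p q hp hq) (fun s₁ hs₁ => ?_)
      linarith [h1 s₁ hs₁]
    linarith [h2]
  · -- completeness
    intro u hu hcauchy
    have ht : CauchySeq (fun n => (u n).1) := by
      rw [Metric.cauchySeq_iff]
      intro ε hε
      obtain ⟨N, hN⟩ := hcauchy ε hε
      refine ⟨N, fun m hm n hn => ?_⟩
      rw [Real.dist_eq]
      exact lt_of_le_of_lt (hlow1 (u n) (u m) (hu n) (hu m)) (hN n hn m hm)
    obtain ⟨t0, ht0⟩ := cauchySeq_tendsto_of_complete ht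
    have ht0I : t0 ∈ I := hIclosed.mem_of_tendsto ht0 (Filter.Eventually.of_forall hu)
    have hx : CauchySeq (fun n => (u n).2) := by
      rw [Metric.cauchySeq_iff]
      intro ε hε
      obtain ⟨N, hN⟩ := hcauchy (fmin * ε) (by positivity)
      refine ⟨N, fun m hm n hn => ?_⟩
      have h1 := hlow2 (u m) (u n) (hu m) (hu n)
      have h2 := hN m hm n hn
      nlinarith [dist_nonneg (x := (u m).2) (y := (u n).2)]
    obtain ⟨x0, hx0⟩ := cauchySeq_tendsto_of_complete hx
    refine ⟨(t0, x0), ht0I, ?_⟩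
    intro ε hε
    rw [Metric.tendsto_atTop] at ht0 hx0
    obtain ⟨N₁, hN₁⟩ := ht0 (ε / 3) (by linarith)
    obtain ⟨N₂, hN₂⟩ := hx0 (ε / (3 * fmax)) (by positivity)
    refine ⟨max N₁ N₂, fun n hn => ?_⟩
    have h1 := hN₁ n (le_of_max_le_left hn)
    have h2 := hN₂ n (le_of_max_le_right hn)
    rw [Real.dist_eq] at h1
    have hup' := hup (u n) (t0, x0) (hu n) ht0I
    have hb1 : |(t0, x0).1 - (u n).1| < ε / 3 := by
      rw [abs_sub_comm]; exact h1
    have hb2 : fmax * dist (u n).2 (t0, x0).2 < fmax * (ε / (3 * fmax)) := by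
      exact mul_lt_mul_of_pos_left h2 hmax
    have hb3 : fmax * (ε / (3 * fmax)) = ε / 3 := by
      field_simp
    calc nullDist I f (u n) (t0, x0) ≤ _ := hup'
      _ < ε / 3 + fmax * (ε / (3 * fmax)) := add_lt_add hb1 hb2
      _ = ε / 3 + ε / 3 := by rw [hb3]
      _ < ε := by linarith
end

section
/- Let X be a length space, I ⊆ ℝ a nondegenerate interval, and f : I → ℝ measurable with 0 < f_min ≤ f(t) ≤ f_max < ∞ for all t ∈ I. Then the null distance d̂_f of the warped product I ×_f X satisfies: (i) if p = (s,x) and q = (t,y) are causally related (p ≼_f q or q ≼_f p), then d̂_f(p,q) = |s − t|; (ii) if p and q are not causally related, then f_min · d(x,y) ≤ d̂_f(p,q) ≤ f_max · d(x,y). -/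
open MeasureTheory

section
variable {X : Type*} [MetricSpace X] {I : Set ℝ} {f : ℝ → ℝ} {fmin fmax : ℝ}

lemma lint_le (hIc : I.OrdConnected) (hmin : 0 < fmin)
    (hlb : ∀ t ∈ I, fmin ≤ f t) {a b : ℝ} (ha : a ∈ I) (hb : b ∈ I) (hab : a ≤ b) :
    ∫⁻ u in Set.Ioc a b, ENNReal.ofReal ((f u)⁻¹) ≤ ENNReal.ofReal ((b - a) / fmin) := by
  have hsub : Set.Ioc a b ⊆ I := Set.Ioc_subset_Icc_self.trans (hIc.out ha hb)
  calc ∫⁻ u in Set.Ioc a b, ENNReal.ofReal ((f u)⁻¹)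
      ≤ ∫⁻ _ in Set.Ioc a b, ENNReal.ofReal (fmin⁻¹) := by
        apply setLIntegral_mono measurable_const
        intro u hu
        exact ENNReal.ofReal_le_ofReal (inv_anti₀ hmin (hlb u (hsub hu)))
    _ = ENNReal.ofReal (fmin⁻¹) * ENNReal.ofReal (b - a) := by
        rw [setLIntegral_const, Real.volume_Ioc]
    _ = ENNReal.ofReal ((b - a) / fmin) := by
        rw [← ENNReal.ofReal_mul (by positivity), div_eq_mul_inv, mul_comm]



lemma lint_ge (hIc : I.OrdConnected) (hf : Measurable f) (hmin : 0 < fmin)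
    (hlb : ∀ t ∈ I, fmin ≤ f t) (hmax : 0 < fmax)
    (hub : ∀ t ∈ I, f t ≤ fmax) {a b : ℝ} (ha : a ∈ I) (hb : b ∈ I) :
    ENNReal.ofReal ((b - a) / fmax) ≤ ∫⁻ u in Set.Ioc a b, ENNReal.ofReal ((f u)⁻¹) := by
  have hsub : Set.Ioc a b ⊆ I := Set.Ioc_subset_Icc_self.trans (hIc.out ha hb)
  calc ENNReal.ofReal ((b - a) / fmax)
      = ENNReal.ofReal (fmax⁻¹) * ENNReal.ofReal (b - a) := by
        rw [← ENNReal.ofReal_mul (by positivity), div_eq_mul_inv, mul_comm]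
    _ = ∫⁻ _ in Set.Ioc a b, ENNReal.ofReal (fmax⁻¹) := by
        rw [setLIntegral_const, Real.volume_Ioc]
    _ ≤ ∫⁻ u in Set.Ioc a b, ENNReal.ofReal ((f u)⁻¹) := by
        apply setLIntegral_mono (hf.inv.ennreal_ofReal)
        intro u hu
        exact ENNReal.ofReal_le_ofReal (inv_anti₀ (hmin.trans_le (hlb u (hsub hu))) (hub u (hsub hu)))

lemma causal_of (hIc : I.OrdConnected) (hf : Measurable f) (hmin : 0 < fmin)
    (hlb : ∀ t ∈ I, fmin ≤ f t) (hmax : 0 < fmax)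
    (hub : ∀ t ∈ I, f t ≤ fmax) {a b : ℝ} {w w' : X} (ha : a ∈ I) (hb : b ∈ I)
    (hab : a ≤ b) (hd : fmax * dist w w' ≤ b - a) :
    WPCausal f ((a, w) : ℝ × X) (b, w') := by
  refine ⟨hab, ?_⟩
  refine le_trans ?_ (lint_ge hIc hf hmin hlb hmax hub ha hb)
  apply ENNReal.ofReal_le_ofReal
  rw [le_div_iff₀ hmax, mul_comm]
  exact hd

lemma dyadic_chain (hX : ∀ x y : X, ∀ ε : ℝ, 0 < ε →
      ∃ z : X, max (dist x z) (dist z y) ≤ dist x y / 2 + ε) :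
    ∀ (m : ℕ) (x y : X) (ε : ℝ), 0 < ε →
      ∃ z : ℕ → X, z 0 = x ∧ z (2^m) = y ∧
        ∀ i < 2^m, dist (z i) (z (i+1)) ≤ dist x y / 2^m + ε := by
  intro m
  induction m with
  | zero =>
    intro x y ε hε
    refine ⟨fun i => if i = 0 then x else y, by simp, by simp, ?_⟩
    intro i hi
    interval_cases i
    simp
    linarith
  | succ m ih =>
    intro x y ε hε
    obtain ⟨w, hw⟩ := hX x y (2^m * (ε/2)) (by positivity)
    obtain ⟨z₁, h10, h11, h1s⟩ := ih x w (ε/2) (by positivity)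
    obtain ⟨z₂, h20, h21, h2s⟩ := ih w y (ε/2) (by positivity)
    have hxw : dist x w ≤ dist x y / 2 + 2^m * (ε/2) := le_trans (le_max_left _ _) hw
    have hwy : dist w y ≤ dist x y / 2 + 2^m * (ε/2) := le_trans (le_max_right _ _) hw
    have h2m : (0:ℝ) < 2^m := by positivity
    refine ⟨fun i => if i ≤ 2^m then z₁ i else z₂ (i - 2^m), by simp [h10], ?_, ?_⟩
    · have hp2 : 2^(m+1) = 2^m + 2^m := by rw [pow_succ, Nat.mul_two]
      have hne : ¬ (2^(m+1) ≤ 2^m) := by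
        have : 0 < 2^m := by positivity
        omega
      show (if 2^(m+1) ≤ 2^m then z₁ (2^(m+1)) else z₂ (2^(m+1) - 2^m)) = y
      rw [if_neg hne, (by omega : 2^(m+1) - 2^m = 2^m), h21]
    · intro i hi
      by_cases hc : i + 1 ≤ 2^m
      · have hi' : i ≤ 2^m := by omega
        simp only [if_pos hc, if_pos hi']
        calc dist (z₁ i) (z₁ (i+1)) ≤ dist x w / 2^m + ε/2 := h1s i (by omega)
          _ ≤ (dist x y / 2 + 2^m * (ε/2)) / 2^m + ε/2 := by
              gcongr
          _ = dist x y / 2^(m+1) + ε := by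
              field_simp
              ring
      · -- i ≥ 2^m
        have hig : 2^m ≤ i := by omega
        have hv1 : (if i ≤ 2^m then z₁ i else z₂ (i - 2^m)) = z₂ (i - 2^m) := by
          by_cases h : i ≤ 2^m
          · have : i = 2^m := by omega
            simp [h, this, h11, h20]
          · simp [h]
        have hv2 : (if i + 1 ≤ 2^m then z₁ (i+1) else z₂ (i + 1 - 2^m)) = z₂ (i - 2^m + 1) := by
          rw [if_neg hc]
          congr 1
          omega
        show dist (if i ≤ 2^m then z₁ i else z₂ (i - 2^m)) (if i + 1 ≤ 2^m then z₁ (i+1) else z₂ (i + 1 - 2^m)) ≤ _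
        rw [hv1, hv2]
        calc dist (z₂ (i - 2^m)) (z₂ (i - 2^m + 1)) ≤ dist w y / 2^m + ε/2 := by
              apply h2s
              have : 2^(m+1) = 2^m + 2^m := by rw [pow_succ]; omega
              omega
          _ ≤ (dist x y / 2 + 2^m * (ε/2)) / 2^m + ε/2 := by gcongr
          _ = dist x y / 2^(m+1) + ε := by field_simp; ring


set_option maxHeartbeats 2000000 in
lemma exists_good_chain
    (hX : ∀ x y : X, ∀ ε : ℝ, 0 < ε →
      ∃ z : X, max (dist x z) (dist z y) ≤ dist x y / 2 + ε)
    (hIc : I.OrdConnected) (hf : Measurable f) (hmin : 0 < fmin) (hmax : 0 < fmax)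
    (hlb : ∀ t ∈ I, fmin ≤ f t) (hub : ∀ t ∈ I, f t ≤ fmax)
    {A B : ℝ} (hA : A ∈ I) (hB : B ∈ I) (hAB : 0 < B - A)
    {s t : ℝ} {x y : X} (hsA : A ≤ s) (htB : t ≤ B)
    (hst : s ≤ t) (htB' : t ≤ B) (hD : 0 < dist x y) (hΔ : t - s < fmax * dist x y)
    {ε : ℝ} (hε : 0 < ε) :
    ∃ r, (∃ n σ, WPChain I f ((s,x) : ℝ × X) (t,y) n σ ∧
      r = ∑ i ∈ Finset.range (n + 1), |(σ (i + 1)).1 - (σ i).1|) ∧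
      r ≤ fmax * dist x y + ε := by
  have hIcc : Set.Icc A B ⊆ I := hIc.out hA hB
  obtain ⟨D, hDdef⟩ : ∃ D, D = dist x y := ⟨_, rfl⟩
  rw [← hDdef] at hD hΔ ⊢
  -- choose the number of steps
  obtain ⟨m₀, hm₀⟩ := pow_unbounded_of_one_lt
    (max (5*fmax*D/ε) (8*fmax*D/(B-A))) (one_lt_two (α := ℝ))
  obtain ⟨m, hmdef⟩ : ∃ m, m = m₀ + 1 := ⟨_, rfl⟩
  obtain ⟨N, hNdef⟩ : ∃ N, N = 2^m := ⟨_, rfl⟩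
  have hNr : ((N:ℕ):ℝ) = 2^m := by rw [hNdef]; push_cast; ring
  have hNpos : (0:ℝ) < (N:ℝ) := by rw [hNr]; positivity
  have hN1 : (1:ℝ) ≤ (N:ℝ) := by
    rw [hNr]
    calc (1:ℝ) = 2^(0:ℕ) := by norm_num
      _ ≤ 2^m := pow_le_pow_right₀ one_le_two (Nat.zero_le m)
  have hNbig : max (5*fmax*D/ε) (8*fmax*D/(B-A)) < (N:ℝ) := by
    rw [hNr]
    exact hm₀.trans_le (pow_le_pow_right₀ one_le_two (by omega))
  have hNeven : N % 2 = 0 := by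
    have : N = 2 * 2^m₀ := by rw [hNdef, hmdef, pow_succ]; ring
    omega
  have hbig1 : 5*fmax*D/(N:ℝ) < ε := by
    rw [div_lt_iff₀ hNpos]
    have h1 : 5*fmax*D/ε < (N:ℝ) := lt_of_le_of_lt (le_max_left _ _) hNbig
    rw [div_lt_iff₀ hε] at h1
    linarith
  have hbig2 : 8*fmax*D/(N:ℝ) < B - A := by
    rw [div_lt_iff₀ hNpos]
    have h1 : 8*fmax*D/(B-A) < (N:ℝ) := lt_of_le_of_lt (le_max_right _ _) hNbig
    rw [div_lt_iff₀ hAB] at h1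
    linarith
  obtain ⟨c, hcdef⟩ : ∃ c, c = fmax * (D/(N:ℝ) + D/(N:ℝ)^2) := ⟨_, rfl⟩
  have hc : 0 < c := by rw [hcdef]; positivity
  have hdd : D/(N:ℝ)^2 ≤ D/(N:ℝ) :=
    div_le_div_of_nonneg_left hD.le hNpos (by nlinarith)
  have hcle : c ≤ 2*fmax*D/(N:ℝ) := by
    calc c = fmax * (D/(N:ℝ) + D/(N:ℝ)^2) := hcdef
      _ ≤ fmax * (D/(N:ℝ) + D/(N:ℝ)) := by gcongr
      _ = 2*fmax*D/(N:ℝ) := by ring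
  have hNc : (N:ℝ) * c = fmax*D + fmax*D/(N:ℝ) := by
    rw [hcdef]; field_simp
  have h4c : 4*c < B - A := by
    have : 4*c ≤ 8*fmax*D/(N:ℝ) := by
      calc 4*c ≤ 4*(2*fmax*D/(N:ℝ)) := by linarith
        _ = 8*fmax*D/(N:ℝ) := by ring
    linarith
  -- the dyadic chain in X
  obtain ⟨z, hz0, hzN, hzs⟩ := dyadic_chain hX m x y (D/(N:ℝ)^2)
    (by have := hNpos; positivity)
  rw [← hNdef] at hzN hzs
  rw [← hDdef, ← hNr] at hzs
  have hzd : ∀ i < N, fmax * dist (z i) (z (i+1)) ≤ c := by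
    intro i hi
    have h1 := hzs i hi
    rw [hcdef]
    nlinarith [h1]
  -- the time profile
  obtain ⟨k, hkdef⟩ : ∃ k, k = 2 * Nat.floor ((t - s)/(2*c)) := ⟨_, rfl⟩
  have hΔ0 : 0 ≤ t - s := by linarith
  have hkr : (k:ℝ) = 2 * (Nat.floor ((t - s)/(2*c)) : ℝ) := by rw [hkdef]; push_cast; ring
  have hk1 : (k:ℝ) * c ≤ t - s := by
    have h1 : (Nat.floor ((t - s)/(2*c)) : ℝ) ≤ (t-s)/(2*c) :=
      Nat.floor_le (div_nonneg hΔ0 (by linarith))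
    rw [hkr]
    calc 2 * (Nat.floor ((t - s)/(2*c)) : ℝ) * c
        = (Nat.floor ((t - s)/(2*c)) : ℝ) * (2*c) := by ring
      _ ≤ ((t-s)/(2*c)) * (2*c) := by
          apply mul_le_mul_of_nonneg_right h1 (by linarith)
      _ = t - s := div_mul_cancel₀ _ (by linarith : (0:ℝ) < 2*c).ne'
  have hk2 : t - s < (k:ℝ)*c + 2*c := by
    have h4 : t - s < ((Nat.floor ((t-s)/(2*c)):ℝ) + 1) * (2*c) := by
      rw [← div_lt_iff₀ (by linarith : (0:ℝ) < 2*c)]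
      exact Nat.lt_floor_add_one _
    rw [hkr]
    nlinarith
  have hkN : k < N := by
    have h5 : (k:ℝ)*c < (N:ℝ)*c := by
      rw [hNc]
      have : 0 < fmax*D/(N:ℝ) := by positivity
      linarith
    have h6 : (k:ℝ) < (N:ℝ) := lt_of_mul_lt_mul_right h5 hc.le
    exact_mod_cast h6
  have hkeven : k % 2 = 0 := by omega
  have hskc : s + (k:ℝ)*c ≤ t := by linarith
  -- the zigzag amplitude direction
  obtain ⟨e, hedef⟩ : ∃ e, e = if t + c ≤ B then c else -c := ⟨_, rfl⟩
  have hee : e = c ∨ e = -c := by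
    rw [hedef]; split <;> simp
  have helo : A ≤ s + (k:ℝ)*c + e := by
    rcases le_or_gt (t + c) B with hcase | hcase
    · have : e = c := by rw [hedef, if_pos hcase]
      rw [this]
      have : 0 ≤ (k:ℝ)*c := mul_nonneg (Nat.cast_nonneg k) hc.le
      linarith
    · have : e = -c := by rw [hedef, if_neg (not_le.mpr hcase)]
      rw [this]
      -- s + kc - c > t - 3c > B - 4c ≥ A
      linarith
  have hehi : s + (k:ℝ)*c + e ≤ B := by
    rcases le_or_gt (t + c) B with hcase | hcase
    · have : e = c := by rw [hedef, if_pos hcase]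
      rw [this]; linarith
    · have : e = -c := by rw [hedef, if_neg (not_le.mpr hcase)]
      rw [this]; linarith
  -- the time profile
  obtain ⟨τ, hτdef⟩ : ∃ τ : ℕ → ℝ, τ = fun i => if i = N + 1 then t else if i ≤ k then s + i * c
      else s + k * c + (if (i - k) % 2 = 1 then e else 0) := ⟨_, rfl⟩
  have hτlast : τ (N+1) = t := by simp [hτdef]
  have hτk : ∀ i ≤ k, τ i = s + i * c := by
    intro i hi
    rw [hτdef]
    simp only [if_neg (by omega : ¬ i = N + 1), if_pos hi]
  have hτmid : ∀ i, k ≤ i → i ≤ N → τ i = s + k * c + (if (i - k) % 2 = 1 then e else 0) := by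
    intro i h1 h2
    by_cases h : i ≤ k
    · have hik : i = k := le_antisymm h h1
      subst hik
      rw [hτk i le_rfl]
      simp
    · rw [hτdef]
      simp only [if_neg (by omega : ¬ i = N + 1), if_neg h]
  have hτN : τ N = s + (k:ℝ) * c := by
    rw [hτmid N (by omega) le_rfl]
    have : (N - k) % 2 = 0 := by omega
    rw [this]
    norm_num
  -- bounds on the profile
  have hbound : ∀ i ≤ N + 1, A ≤ τ i ∧ τ i ≤ B := by
    intro i hi
    by_cases h1 : i = N + 1
    · subst h1; rw [hτlast]; exact ⟨by linarith, htB⟩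
    by_cases h2 : i ≤ k
    · rw [hτk i h2]
      have hik : (i:ℝ) ≤ (k:ℝ) := Nat.cast_le.mpr h2
      have h3 : 0 ≤ (i:ℝ)*c := mul_nonneg (Nat.cast_nonneg i) hc.le
      have h4 : (i:ℝ)*c ≤ (k:ℝ)*c := by
        apply mul_le_mul_of_nonneg_right hik hc.le
      constructor <;> linarith
    · rw [hτmid i (by omega) (by omega)]
      by_cases h3 : (i - k) % 2 = 1
      · rw [if_pos h3]; exact ⟨helo, hehi⟩
      · rw [if_neg h3]
        have : 0 ≤ (k:ℝ)*c := mul_nonneg (Nat.cast_nonneg k) hc.le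
        norm_num
        constructor <;> linarith
  have hmem : ∀ i ≤ N + 1, τ i ∈ I := fun i hi =>
    hIcc ⟨(hbound i hi).1, (hbound i hi).2⟩
  -- each of the first N steps moves by exactly c, up or down
  have hstep : ∀ i < N, τ (i+1) = τ i + c ∨ τ (i+1) = τ i - c := by
    intro i hi
    by_cases h1 : i + 1 ≤ k
    · left
      rw [hτk i (by omega), hτk (i+1) h1]
      push_cast
      ring
    · have hki : k ≤ i := by omega
      rw [hτmid i hki (by omega), hτmid (i+1) (by omega) (by omega)]
      have he1 : i + 1 - k = (i - k) + 1 := by omega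
      by_cases h3 : (i - k) % 2 = 1
      · have h4 : ¬ ((i + 1 - k) % 2 = 1) := by omega
        rw [if_pos h3, if_neg h4]
        rcases hee with h | h <;> rw [h] <;> [right; left] <;> ring
      · have h4 : (i + 1 - k) % 2 = 1 := by omega
        rw [if_pos h4, if_neg h3]
        rcases hee with h | h <;> rw [h] <;> [left; right] <;> ring
  have habs : ∀ i < N, |τ (i+1) - τ i| = c := by
    intro i hi
    rcases hstep i hi with h | h <;> rw [h]
    · rw [show τ i + c - τ i = c by ring]
      exact abs_of_pos hc
    · rw [show τ i - c - τ i = -c by ring, abs_neg]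
      exact abs_of_pos hc
  -- the chain
  set σ : ℕ → ℝ × X := fun i => (τ i, z (min i N)) with hσdef
  have hchain : WPChain I f ((s,x) : ℝ × X) (t,y) N σ := by
    refine ⟨?_, ?_, fun i hi => hmem i hi, ?_⟩
    · show (τ 0, z (min 0 N)) = (s, x)
      rw [hτk 0 (by omega), Nat.min_eq_left (by omega), hz0]
      norm_num
    · show (τ (N+1), z (min (N+1) N)) = (t, y)
      rw [hτlast, Nat.min_eq_right (by omega), hzN]
    · intro i hi
      by_cases hiN : i < N
      · have hmin1 : min i N = i := Nat.min_eq_left (by omega)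
        have hmin2 : min (i+1) N = i + 1 := Nat.min_eq_left (by omega)
        have hzi := hzd i hiN
        rcases hstep i hiN with h | h
        · left
          show WPCausal f (τ i, z (min i N)) (τ (i+1), z (min (i+1) N))
          rw [hmin1, hmin2, h]
          exact causal_of hIc hf hmin hlb hmax hub (hmem i (by omega))
            (h ▸ hmem (i+1) (by omega)) (by linarith) (by linarith)
        · right
          show WPCausal f (τ (i+1), z (min (i+1) N)) (τ i, z (min i N))
          rw [hmin1, hmin2, h]
          have := causal_of (w := z (i+1)) (w' := z i) hIc hf hmin hlb hmax hub
            (h ▸ hmem (i+1) (by omega)) (hmem i (by omega))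
            (by linarith) (by rw [dist_comm]; linarith)
          exact this
      · have hiN' : i = N := by omega
        left
        rw [hiN']
        show WPCausal f (τ N, z (min N N)) (τ (N+1), z (min (N+1) N))
        rw [hτN, hτlast, Nat.min_self, Nat.min_eq_right (by omega : N ≤ N + 1)]
        exact causal_of hIc hf hmin hlb hmax hub
          (by rw [← hτN]; exact hmem N (by omega))
          (by rw [← hτlast]; exact hmem (N+1) (by omega))
          hskc (by rw [dist_self]; linarith)
  -- the null length of the chain
  have hsum : ∑ i ∈ Finset.range (N + 1), |(σ (i + 1)).1 - (σ i).1|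
      = (N:ℝ)*c + (t - (s + (k:ℝ)*c)) := by
    have hfst : ∀ i, (σ i).1 = τ i := fun i => rfl
    simp only [hfst]
    rw [Finset.sum_range_succ]
    have h1 : ∑ i ∈ Finset.range N, |τ (i+1) - τ i| = (N:ℝ)*c := by
      rw [Finset.sum_congr rfl (fun i hi => habs i (Finset.mem_range.1 hi)),
        Finset.sum_const, Finset.card_range, nsmul_eq_mul]
    rw [h1, hτN, hτlast, abs_of_nonneg (by linarith)]
  refine ⟨_, ⟨N, σ, hchain, rfl⟩, ?_⟩
  rw [hsum, hNc]
  have h6 : t - (s + (k:ℝ)*c) ≤ 2*c := by linarith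
  have h7 : 2*c ≤ 4*fmax*D/(N:ℝ) := by
    calc 2*c ≤ 2*(2*fmax*D/(N:ℝ)) := by linarith
      _ = 4*fmax*D/(N:ℝ) := by ring
  have h8 : fmax*D/(N:ℝ) + 4*fmax*D/(N:ℝ) ≤ 5*fmax*D/(N:ℝ) := by
    ring_nf
    linarith [le_refl (fmax*D/(N:ℝ))]
  linarith


lemma chain_reverse {p q : ℝ × X} {n : ℕ} {σ : ℕ → ℝ × X} (h : WPChain I f p q n σ) :
    WPChain I f q p n (fun i => σ (n + 1 - i)) ∧
    ∑ i ∈ Finset.range (n + 1), |(σ (n + 1 - (i+1))).1 - (σ (n + 1 - i)).1|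
      = ∑ i ∈ Finset.range (n + 1), |(σ (i + 1)).1 - (σ i).1| := by
  obtain ⟨h0, h1, hm, hc⟩ := h
  constructor
  · refine ⟨by simpa using h1, by simpa using h0, fun i hi => hm _ (by omega), ?_⟩
    intro i hi
    have e1 : n + 1 - i = (n - i) + 1 := by omega
    have e2 : n + 1 - (i + 1) = n - i := by omega
    simp only [e1, e2]
    exact (hc (n - i) (by omega)).symm
  · rw [← Finset.sum_range_reflect (fun j => |(σ (j + 1)).1 - (σ j).1|) (n+1)]
    apply Finset.sum_congr rfl
    intro i hi
    simp only [Finset.mem_range] at hi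
    have e1 : n + 1 - (i+1) = n - i := by omega
    have e2 : n + 1 - i = (n - i) + 1 := by omega
    have e3 : n + 1 - 1 - i = n - i := by omega
    rw [e1, e2, e3, abs_sub_comm]

lemma nullDist_symm (p q : ℝ × X) : nullDist I f p q = nullDist I f q p := by
  unfold nullDist
  congr 1
  ext r
  constructor
  · rintro ⟨n, σ, hch, rfl⟩
    exact ⟨n, fun i => σ (n + 1 - i), (chain_reverse hch).1, ((chain_reverse hch).2).symm⟩
  · rintro ⟨n, σ, hch, rfl⟩
    exact ⟨n, fun i => σ (n + 1 - i), (chain_reverse hch).1, ((chain_reverse hch).2).symm⟩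

lemma nullDist_bddBelow (p q : ℝ × X) : BddBelow { r | ∃ n σ, WPChain I f p q n σ ∧
    r = ∑ i ∈ Finset.range (n + 1), |(σ (i + 1)).1 - (σ i).1| } := by
  refine ⟨0, ?_⟩
  rintro r ⟨n, σ, hch, rfl⟩
  exact Finset.sum_nonneg fun i _ => abs_nonneg _

lemma chain_len_ge_abs {p q : ℝ × X} {n : ℕ} {σ : ℕ → ℝ × X} (h : WPChain I f p q n σ) :
    |p.1 - q.1| ≤ ∑ i ∈ Finset.range (n + 1), |(σ (i + 1)).1 - (σ i).1| := by
  obtain ⟨h0, h1, hm, hc⟩ := h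
  have := dist_le_range_sum_dist (fun i => (σ i).1) (n + 1)
  simp only [Real.dist_eq] at this
  calc |p.1 - q.1| = |(σ 0).1 - (σ (n+1)).1| := by rw [h0, h1]
    _ ≤ ∑ i ∈ Finset.range (n + 1), |(σ i).1 - (σ (i+1)).1| := this
    _ = ∑ i ∈ Finset.range (n + 1), |(σ (i+1)).1 - (σ i).1| := by
        exact Finset.sum_congr rfl fun i _ => abs_sub_comm _ _

lemma causal_time (hIc : I.OrdConnected) (hmin : 0 < fmin)
    (hlb : ∀ t ∈ I, fmin ≤ f t) {p q : ℝ × X} (hp : p.1 ∈ I) (hq : q.1 ∈ I)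
    (h : WPCausal f p q) : fmin * dist p.2 q.2 ≤ q.1 - p.1 := by
  obtain ⟨hab, hint⟩ := h
  have := hint.trans (lint_le hIc hmin hlb hp hq hab)
  rw [ENNReal.ofReal_le_ofReal_iff (div_nonneg (by linarith) hmin.le)] at this
  rw [mul_comm, ← le_div_iff₀ hmin]
  exact this

lemma chain_len_ge_fmin (hIc : I.OrdConnected) (hmin : 0 < fmin)
    (hlb : ∀ t ∈ I, fmin ≤ f t) {p q : ℝ × X} {n : ℕ} {σ : ℕ → ℝ × X}
    (h : WPChain I f p q n σ) :
    fmin * dist p.2 q.2 ≤ ∑ i ∈ Finset.range (n + 1), |(σ (i + 1)).1 - (σ i).1| := by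
  obtain ⟨h0, h1, hm, hc⟩ := h
  have key : ∀ i ≤ n, fmin * dist (σ i).2 (σ (i+1)).2 ≤ |(σ (i + 1)).1 - (σ i).1| := by
    intro i hi
    rcases hc i hi with hcc | hcc
    · have h2 := causal_time hIc hmin hlb (hm i (by omega)) (hm (i+1) (by omega)) hcc
      rw [abs_of_nonneg (by linarith [hcc.1])]
      exact h2
    · have h2 := causal_time hIc hmin hlb (hm (i+1) (by omega)) (hm i (by omega)) hcc
      rw [dist_comm (σ (i+1)).2 (σ i).2] at h2
      rw [abs_of_nonpos (by linarith [hcc.1])]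
      linarith
  calc fmin * dist p.2 q.2 = fmin * dist ((fun i => (σ i).2) 0) ((fun i => (σ i).2) (n+1)) := by
        rw [show (fun i => (σ i).2) 0 = (σ 0).2 from rfl, show (fun i => (σ i).2) (n+1) = (σ (n+1)).2 from rfl, h0, h1]
    _ ≤ fmin * ∑ i ∈ Finset.range (n + 1), dist ((fun i => (σ i).2) i) ((fun i => (σ i).2) (i+1)) := by
        apply mul_le_mul_of_nonneg_left (dist_le_range_sum_dist (fun i => (σ i).2) (n+1)) hmin.le
    _ = ∑ i ∈ Finset.range (n + 1), fmin * dist (σ i).2 (σ (i+1)).2 := Finset.mul_sum _ _ _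
    _ ≤ ∑ i ∈ Finset.range (n + 1), |(σ (i + 1)).1 - (σ i).1| :=
        Finset.sum_le_sum fun i hi => key i (Nat.lt_succ_iff.mp (Finset.mem_range.mp hi))

lemma noncausal_bounds
    (hX : ∀ x y : X, ∀ ε : ℝ, 0 < ε →
      ∃ z : X, max (dist x z) (dist z y) ≤ dist x y / 2 + ε)
    (hIc : I.OrdConnected) (hf : Measurable f) (hmin : 0 < fmin) (hmax : 0 < fmax)
    (hlb : ∀ t ∈ I, fmin ≤ f t) (hub : ∀ t ∈ I, f t ≤ fmax)
    {a b : ℝ} (ha : a ∈ I) (hb : b ∈ I) (hab : a < b)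
    {p q : ℝ × X} (hp : p.1 ∈ I) (hq : q.1 ∈ I) (hst : p.1 ≤ q.1)
    (hnc : ¬ WPCausal f p q) :
    fmin * dist p.2 q.2 ≤ nullDist I f p q ∧ nullDist I f p q ≤ fmax * dist p.2 q.2 := by
  -- consequences of non-causality
  have hint := lint_ge hIc hf hmin hlb hmax hub hp hq (a := p.1) (b := q.1)
  have hlt : ∫⁻ u in Set.Ioc p.1 q.1, ENNReal.ofReal ((f u)⁻¹)
      < ENNReal.ofReal (dist p.2 q.2) := by
    by_contra hcon
    push_neg at hcon
    exact hnc ⟨hst, hcon⟩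
  have hd0 : 0 < dist p.2 q.2 := by
    rcases lt_or_ge 0 (dist p.2 q.2) with h | h
    · exact h
    · exfalso
      have : dist p.2 q.2 = 0 := le_antisymm h dist_nonneg
      rw [this, ENNReal.ofReal_zero] at hlt
      exact (not_lt.mpr zero_le) hlt
  have hΔ : q.1 - p.1 < fmax * dist p.2 q.2 := by
    have h2 : ENNReal.ofReal ((q.1 - p.1)/fmax) < ENNReal.ofReal (dist p.2 q.2) :=
      lt_of_le_of_lt hint hlt
    rw [ENNReal.ofReal_lt_ofReal_iff hd0] at h2
    rw [div_lt_iff₀ hmax] at h2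
    linarith [h2]
  -- the band [A, B]
  have hA : min a p.1 ∈ I := by
    rcases min_cases a p.1 with ⟨h, _⟩ | ⟨h, _⟩ <;> rw [h] <;> assumption
  have hB : max b q.1 ∈ I := by
    rcases max_cases b q.1 with ⟨h, _⟩ | ⟨h, _⟩ <;> rw [h] <;> assumption
  have hAB : 0 < max b q.1 - min a p.1 := by
    have h1 := min_le_left a p.1
    have h2 := le_max_left b q.1
    linarith
  have hsA : min a p.1 ≤ p.1 := min_le_right a p.1
  have htB : q.1 ≤ max b q.1 := le_max_right b q.1
  -- chains with almost optimal null length exist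
  have hchains : ∀ ε : ℝ, 0 < ε → ∃ r, (∃ n σ, WPChain I f p q n σ ∧
      r = ∑ i ∈ Finset.range (n + 1), |(σ (i + 1)).1 - (σ i).1|) ∧
      r ≤ fmax * dist p.2 q.2 + ε := by
    intro ε hε
    obtain ⟨r, hr1, hr2⟩ := exists_good_chain hX hIc hf hmin hmax hlb hub hA hB hAB
      hsA htB hst htB hd0 hΔ hε
    rw [Prod.mk.eta, Prod.mk.eta] at hr1
    exact ⟨r, hr1, hr2⟩
  obtain ⟨r₀, hr₀, _⟩ := hchains 1 one_pos
  constructor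
  · apply le_csInf ⟨r₀, hr₀⟩
    rintro r ⟨n, σ, hch, rfl⟩
    exact chain_len_ge_fmin hIc hmin hlb hch
  · apply le_of_forall_pos_le_add
    intro ε hε
    obtain ⟨r, hr1, hr2⟩ := hchains ε hε
    exact (csInf_le (nullDist_bddBelow p q) hr1).trans hr2

end


/-- for a length space `X`, a nondegenerate interval `I` and a measurable
warping function with `0 < fmin ≤ f ≤ fmax` on `I`, the null distance of `I ×_f X`
satisfies: (i) `d̂_f(p,q) = |s − t|` if `p = (s,x)` and `q = (t,y)` are causally related;
(ii) `fmin·d(x,y) ≤ d̂_f(p,q) ≤ fmax·d(x,y)` otherwise. -/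
theorem stmt5 {X : Type*} [MetricSpace X]
    (hX : ∀ x y : X, ∀ ε : ℝ, 0 < ε →
      ∃ z : X, max (dist x z) (dist z y) ≤ dist x y / 2 + ε)
    (I : Set ℝ) (hIc : I.OrdConnected) (hInd : ∃ a ∈ I, ∃ b ∈ I, a < b)
    (f : ℝ → ℝ) (hf : Measurable f)
    (fmin fmax : ℝ) (hmin : 0 < fmin)
    (hbd : ∀ t ∈ I, fmin ≤ f t ∧ f t ≤ fmax) :
    ∀ p q : ℝ × X, p.1 ∈ I → q.1 ∈ I →
      ((WPCausal f p q ∨ WPCausal f q p) → nullDist I f p q = |p.1 - q.1|) ∧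
      (¬(WPCausal f p q ∨ WPCausal f q p) →
        fmin * dist p.2 q.2 ≤ nullDist I f p q ∧
        nullDist I f p q ≤ fmax * dist p.2 q.2) := by
  obtain ⟨a, ha, b, hb, hab⟩ := hInd
  have hlb : ∀ t ∈ I, fmin ≤ f t := fun t ht => (hbd t ht).1
  have hub : ∀ t ∈ I, f t ≤ fmax := fun t ht => (hbd t ht).2
  have hmax : 0 < fmax := lt_of_lt_of_le hmin ((hlb a ha).trans (hub a ha))
  intro p q hp hq
  constructor
  · -- (i) causally related
    intro hc
    have hmem : |p.1 - q.1| ∈ { r | ∃ n σ, WPChain I f p q n σ ∧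
        r = ∑ i ∈ Finset.range (n + 1), |(σ (i + 1)).1 - (σ i).1| } := by
      refine ⟨0, fun i => if i = 0 then p else q, ⟨rfl, rfl, ?_, ?_⟩, ?_⟩
      · intro i _
        by_cases h : i = 0 <;> simp [h, hp, hq]
      · intro i hi
        have hi0 : i = 0 := by omega
        subst hi0
        simpa using hc
      · rw [Finset.sum_range_one]
        norm_num [abs_sub_comm]
    refine le_antisymm (csInf_le (nullDist_bddBelow p q) hmem) ?_
    apply le_csInf ⟨_, hmem⟩
    rintro r ⟨n, σ, hch, rfl⟩
    exact chain_len_ge_abs hch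
  · -- (ii) not causally related
    intro hnc
    push_neg at hnc
    obtain ⟨hnc1, hnc2⟩ := hnc
    rcases le_total p.1 q.1 with hst | hst
    · exact noncausal_bounds hX hIc hf hmin hmax hlb hub ha hb hab hp hq hst hnc1
    · have h := noncausal_bounds hX hIc hf hmin hmax hlb hub ha hb hab hq hp hst hnc2
      rw [nullDist_symm q p, dist_comm q.2 p.2] at h
      exact h
end
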